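/- Let 𝕄 = (M,𝒞) be a countable transitive model of GB⁻ and let ℙ be a notion of class forcing for 𝕄. Suppose ℙ satisfies the definability lemma for 'v₀ ∈ v₁' or for 'v₀ = v₁' over 𝕄. Then ℙ satisfies the forcing theorem for all atomic ∈-formulae over 𝕄, and furthermore ℙ satisfies the forcing theorem over 𝕄 for every formula of each language L^n, the language of set theory with n additional unary predicate symbols interpreted by evaluations Γ₀^G,…,Γ_{n−1}^G of class ℙ-names Γᵢ ∈ 𝒞^ℙ. -/

import Mathlib

set_option autoImplicit false

attribute [local instance] Classical.propDecidable

namespace CF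

/-- First-order formulas of the language of set theory with `κ` class-predicate
variables (the languages `L^κ`) and `n` free set variables; `κ = 0` gives the
pure ∈-formulas. There is no class quantification. -/
inductive CFml : ℕ → ℕ → Type
  | mem {κ n : ℕ} (i j : Fin n) : CFml κ n
  | eq {κ n : ℕ} (i j : Fin n) : CFml κ n
  | cls {κ n : ℕ} (X : Fin κ) (i : Fin n) : CFml κ n
  | not {κ n : ℕ} : CFml κ n → CFml κ n
  | or {κ n : ℕ} : CFml κ n → CFml κ n → CFml κ n
  | ex {κ n : ℕ} : CFml κ (n + 1) → CFml κ n

/-- Satisfaction of such a formula in the structure whose domain is the class `D`,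
with class predicates interpreted by `Γ` and variable assignment `v`. -/
def SatC (D : Set ZFSet) : ∀ {κ n : ℕ}, (Fin κ → Set ZFSet) → CFml κ n → (Fin n → ZFSet) → Prop
  | _, _, _, .mem i j, v => v i ∈ v j
  | _, _, _, .eq i j, v => v i = v j
  | _, _, Γ, .cls X i, v => v i ∈ Γ X
  | _, _, Γ, .not φ, v => ¬ SatC D Γ φ v
  | _, _, Γ, .or φ ψ, v => SatC D Γ φ v ∨ SatC D Γ ψ v
  | _, _, Γ, .ex φ, v => ∃ x ∈ D, SatC D Γ φ (Fin.snoc v x)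

/-- Pure ∈-formulas with `n` free variables. -/
abbrev Fml (n : ℕ) : Type := CFml 0 n

/-- Satisfaction of an ∈-formula in `(M, ∈)` (quantifiers relativized to `M`). -/
def Sat (M : ZFSet) {n : ℕ} (φ : Fml n) (v : Fin n → ZFSet) : Prop :=
  SatC M.toSet (fun i => i.elim0) φ v

/-- A `k`-ary relation on `M` is definable (with parameters) over `(M, ∈)`. -/
def DefinableOver (M : ZFSet) {k : ℕ} (S : (Fin k → ZFSet) → Prop) : Prop :=
  ∃ (m : ℕ) (φ : Fml (k + m)) (a : Fin m → ZFSet), (∀ i, a i ∈ M) ∧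
    ∀ v : Fin k → ZFSet, (∀ i, v i ∈ M) → (S v ↔ Sat M φ (Fin.append v a))

/-- The collection of classes of `M` that are definable over `(M,∈)` with parameters. -/
def DefClasses (M : ZFSet) : Set (Set ZFSet) :=
  {S | S ⊆ M.toSet ∧ DefinableOver M (fun v : Fin 1 → ZFSet => v 0 ∈ S)}

/-- `M` is a countable transitive model of `ZF⁻` (`ZF` without the power set axiom,
with Collection instead of Replacement), stated semantically via
the closure conditions that satisfaction of the `ZF⁻`-axioms imposes on a
transitive set (Foundation is automatic for transitive sets). -/
structure IsCTM (M : ZFSet) : Prop where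
  countable : M.toSet.Countable
  transitive : M.IsTransitive
  empty_mem : (∅ : ZFSet) ∈ M
  pairing : ∀ x ∈ M, ∀ y ∈ M, ({x, y} : ZFSet) ∈ M
  union : ∀ x ∈ M, (ZFSet.sUnion x : ZFSet) ∈ M
  infinity : ZFSet.omega ∈ M
  separation : ∀ (m : ℕ) (φ : Fml (m + 1)) (a : Fin m → ZFSet), (∀ i, a i ∈ M) →
    ∀ x ∈ M, ZFSet.sep (fun y => Sat M φ (Fin.snoc a y)) x ∈ M
  collection : ∀ (m : ℕ) (φ : Fml (m + 2)) (a : Fin m → ZFSet), (∀ i, a i ∈ M) →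
    ∀ x ∈ M, (∀ y ∈ x, ∃ z ∈ M, Sat M φ (Fin.snoc (Fin.snoc a y) z)) →
      ∃ b ∈ M, ∀ y ∈ x, ∃ z ∈ b, Sat M φ (Fin.snoc (Fin.snoc a y) z)

/-- `x` is a (von Neumann) ordinal. -/
def IsOrdZ (x : ZFSet) : Prop := x.IsTransitive ∧ ∀ y ∈ x, ZFSet.IsTransitive y

/-- `α` is an ordinal of the model `M`. -/
def IsOrdIn (M α : ZFSet) : Prop := α ∈ M ∧ IsOrdZ α
/-- A notion of (class) forcing for `(M, C)`: a preorder whose domain and order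
relation are classes in `C` and whose conditions are elements of `M`, with a
maximal element `one`. For the first-order setting of a partial order definable
over a model `M` of `ZF⁻`, take `C = DefClasses M`. -/
structure ClassForcing (M : ZFSet) (C : Set (Set ZFSet)) where
  P : Set ZFSet
  le : ZFSet → ZFSet → Prop
  P_subM : ∀ p ∈ P, p ∈ M
  P_mem : P ∈ C
  le_mem : {x : ZFSet | ∃ p ∈ P, ∃ q ∈ P, le p q ∧ x = ZFSet.pair p q} ∈ C
  le_refl : ∀ p ∈ P, le p p
  le_trans : ∀ p ∈ P, ∀ q ∈ P, ∀ r ∈ P, le p q → le q r → le p r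
  one : ZFSet
  one_mem : one ∈ P
  le_one : ∀ p ∈ P, le p one

variable {M : ZFSet} {C : Set (Set ZFSet)}

/-- `p` and `q` are compatible in `F`. -/
def Compat (F : ClassForcing M C) (p q : ZFSet) : Prop :=
  ∃ r ∈ F.P, F.le r p ∧ F.le r q

/-- `F` is antisymmetric, i.e. an actual partial order. -/
def Antisymmetric (F : ClassForcing M C) : Prop :=
  ∀ p ∈ F.P, ∀ q ∈ F.P, F.le p q → F.le q p → p = q

/-- `F` is separative. -/
def Separative (F : ClassForcing M C) : Prop :=
  ∀ p ∈ F.P, ∀ q ∈ F.P, ¬ F.le p q → ∃ r ∈ F.P, F.le r p ∧ ¬ Compat F r q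

/-- `σ` is a `P`-name: every element of `σ` is a pair `⟨τ, p⟩` where `τ` is a
`P`-name and `p ∈ P`. -/
inductive IsName (P : Set ZFSet) : ZFSet → Prop
  | intro (σ : ZFSet)
      (hshape : ∀ x ∈ σ, ∃ τ p, p ∈ P ∧ x = ZFSet.pair τ p)
      (hrec : ∀ τ p : ZFSet, ZFSet.pair τ p ∈ σ → IsName P τ) : IsName P σ

theorem transGen_mem_of_pair_mem {τ p σ : ZFSet} (h : ZFSet.pair τ p ∈ σ) :
    Relation.TransGen (· ∈ ·) τ σ := by
  have h1 : τ ∈ ({τ, p} : ZFSet) := by simp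
  have h2 : ({τ, p} : ZFSet) ∈ ZFSet.pair τ p := by simp [ZFSet.pair]
  exact Relation.TransGen.tail (Relation.TransGen.tail (Relation.TransGen.single h1) h2) h

/-- The evaluation `σ^G = {τ^G ∣ ∃ p ∈ G, ⟨τ,p⟩ ∈ σ}` of a name by a filter `G`
(defined by recursion on the transitive closure of `∈`; note that any `τ` with
`⟨τ,p⟩ ∈ σ` satisfies `τ ∈ ⋃₀ ⋃₀ σ`). -/
noncomputable def val (G : Set ZFSet) : ZFSet → ZFSet :=
  WellFounded.fix (ZFSet.mem_wf.transGen) fun σ ih =>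
    @ZFSet.image
      (fun τ => if h : Relation.TransGen (· ∈ ·) τ σ then ih τ h else ∅)
      (Classical.allZFSetDefinable _)
      (ZFSet.sep (fun τ => ∃ p ∈ G, ZFSet.pair τ p ∈ σ) (ZFSet.sUnion (ZFSet.sUnion σ : ZFSet) : ZFSet))

/-- `D` is dense in the forcing `(P, ≤)`. -/
def DenseIn (P : Set ZFSet) (le : ZFSet → ZFSet → Prop) (D : Set ZFSet) : Prop :=
  ∀ p ∈ P, ∃ q ∈ D, q ∈ P ∧ le q p

/-- `G` is a filter on `(P, ≤)` which is generic over `(M, C)`, i.e. it meets every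
dense subclass of `P` lying in `C`. -/
structure IsGenericRaw (M : ZFSet) (C : Set (Set ZFSet)) (P : Set ZFSet)
    (le : ZFSet → ZFSet → Prop) (G : Set ZFSet) : Prop where
  sub : G ⊆ P
  upward : ∀ p ∈ G, ∀ q ∈ P, le p q → q ∈ G
  compat : ∀ p ∈ G, ∀ q ∈ G, ∃ r ∈ G, le r p ∧ le r q
  meets : ∀ D ∈ C, D ⊆ P → DenseIn P le D → (D ∩ G).Nonempty

/-- `G` is `F`-generic over `(M, C)`. -/
def IsGeneric (F : ClassForcing M C) (G : Set ZFSet) : Prop :=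
  IsGenericRaw M C F.P F.le G

/-- The generic extension `M[G] = {σ^G ∣ σ ∈ M^P}` as a class. -/
def MG (M : ZFSet) (P : Set ZFSet) (G : Set ZFSet) : Set ZFSet :=
  {x | ∃ σ, σ ∈ M ∧ IsName P σ ∧ x = val G σ}

/-- `Γ` is a class `P`-name over `(M, C)`. -/
def IsClassName (M : ZFSet) (C : Set (Set ZFSet)) (P : Set ZFSet) (Γ : Set ZFSet) : Prop :=
  Γ ∈ C ∧ ∀ x ∈ Γ, ∃ τ p, τ ∈ M ∧ IsName P τ ∧ p ∈ P ∧ x = ZFSet.pair τ p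

/-- Evaluation `Γ^G` of a class name. -/
def classVal (G : Set ZFSet) (Γ : Set ZFSet) : Set ZFSet :=
  {x | ∃ τ p, p ∈ G ∧ ZFSet.pair τ p ∈ Γ ∧ x = val G τ}

/-- Encoding of a tuple of sets as a single set (iterated Kuratowski pairs). -/
def tupleZF : ∀ {k : ℕ}, (Fin k → ZFSet) → ZFSet
  | 0, _ => ∅
  | _ + 1, v => ZFSet.pair (v 0) (tupleZF (fun i => v i.succ))

/-- `p ⊩ φ(σ⃗)` (with class-name parameters `Γ⃗`): for every `F`-generic filter `G`
over `(M, C)` with `p ∈ G`, `φ(σ⃗^G)` holds in `(M[G], ∈, Γ⃗^G)`. -/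
def Forces (F : ClassForcing M C) {κ n : ℕ} (φ : CFml κ n)
    (Γ : Fin κ → Set ZFSet) (p : ZFSet) (σ : Fin n → ZFSet) : Prop :=
  ∀ G : Set ZFSet, IsGeneric F G → p ∈ G →
    SatC (MG M F.P G) (fun i => classVal G (Γ i)) φ (fun i => val G (σ i))

/-- The definability lemma for `φ` over `(M, C)`: for all class-name parameters,
the class of tuples `⟨p, σ⃗⟩` such that `p ⊩ φ(σ⃗)` is in `C`. -/
def DefLemma (F : ClassForcing M C) {κ n : ℕ} (φ : CFml κ n) : Prop :=
  ∀ Γ : Fin κ → Set ZFSet, (∀ i, IsClassName M C F.P (Γ i)) →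
    {x : ZFSet | ∃ p ∈ F.P, ∃ σ : Fin n → ZFSet,
      (∀ i, σ i ∈ M ∧ IsName F.P (σ i)) ∧ Forces F φ Γ p σ ∧
      x = ZFSet.pair p (tupleZF σ)} ∈ C

/-- The truth lemma for `φ` over `(M, C)`: everything true in a generic extension
is forced by some condition in the generic filter. -/
def TruthLemma (F : ClassForcing M C) {κ n : ℕ} (φ : CFml κ n) : Prop :=
  ∀ Γ : Fin κ → Set ZFSet, (∀ i, IsClassName M C F.P (Γ i)) →
    ∀ σ : Fin n → ZFSet, (∀ i, σ i ∈ M ∧ IsName F.P (σ i)) →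
      ∀ G : Set ZFSet, IsGeneric F G →
        SatC (MG M F.P G) (fun i => classVal G (Γ i)) φ (fun i => val G (σ i)) →
        ∃ p ∈ G, Forces F φ Γ p σ

/-- The forcing theorem for `φ` over `(M, C)`. -/
def ForcingThm (F : ClassForcing M C) {κ n : ℕ} (φ : CFml κ n) : Prop :=
  DefLemma F φ ∧ TruthLemma F φ
/-- `(M, C)` is a countable transitive model of `GB⁻`: Gödel–Bernays set theory
without the power set axiom, stated semantically. The set axioms are those of
`ZF⁻`, with class parameters allowed in Separation and Collection; the class
axioms are extensionality (automatic for collections of sets), foundation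
(automatic) and first-order class comprehension. -/
structure GBminus (M : ZFSet) (C : Set (Set ZFSet)) : Prop where
  countable : M.toSet.Countable
  countableC : C.Countable
  transitive : M.IsTransitive
  classes_sub : ∀ X ∈ C, X ⊆ M.toSet
  empty_mem : (∅ : ZFSet) ∈ M
  pairing : ∀ x ∈ M, ∀ y ∈ M, ({x, y} : ZFSet) ∈ M
  union : ∀ x ∈ M, (ZFSet.sUnion x : ZFSet) ∈ M
  infinity : ZFSet.omega ∈ M
  separation : ∀ (κ m : ℕ) (φ : CFml κ (m + 1)) (Γ : Fin κ → Set ZFSet),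
    (∀ i, Γ i ∈ C) → ∀ (a : Fin m → ZFSet), (∀ i, a i ∈ M) →
    ∀ x ∈ M, ZFSet.sep (fun y => SatC M.toSet Γ φ (Fin.snoc a y)) x ∈ M
  collection : ∀ (κ m : ℕ) (φ : CFml κ (m + 2)) (Γ : Fin κ → Set ZFSet),
    (∀ i, Γ i ∈ C) → ∀ (a : Fin m → ZFSet), (∀ i, a i ∈ M) →
    ∀ x ∈ M, (∀ y ∈ x, ∃ z ∈ M, SatC M.toSet Γ φ (Fin.snoc (Fin.snoc a y) z)) →
      ∃ b ∈ M, ∀ y ∈ x, ∃ z ∈ b, SatC M.toSet Γ φ (Fin.snoc (Fin.snoc a y) z)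
  comprehension : ∀ (κ m : ℕ) (φ : CFml κ (m + 1)) (Γ : Fin κ → Set ZFSet),
    (∀ i, Γ i ∈ C) → ∀ (a : Fin m → ZFSet), (∀ i, a i ∈ M) →
    {y : ZFSet | y ∈ M ∧ SatC M.toSet Γ φ (Fin.snoc a y)} ∈ C

/-! ### Infrastructure -/

theorem val_eq (G : Set ZFSet) (σ : ZFSet) :
    val G σ = @ZFSet.image
      (fun τ => if h : Relation.TransGen (· ∈ ·) τ σ then val G τ else ∅)
      (Classical.allZFSetDefinable _)
      (ZFSet.sep (fun τ => ∃ p ∈ G, ZFSet.pair τ p ∈ σ) (ZFSet.sUnion (ZFSet.sUnion σ : ZFSet) : ZFSet)) := by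
  conv_lhs => rw [val, WellFounded.fix_eq]
  rfl

theorem mem_val {G : Set ZFSet} {σ y : ZFSet} :
    y ∈ val G σ ↔ ∃ τ p, p ∈ G ∧ ZFSet.pair τ p ∈ σ ∧ y = val G τ := by
  conv_lhs => rw [val_eq]
  rw [@ZFSet.mem_image _ (Classical.allZFSetDefinable _)]
  constructor
  · rintro ⟨z, hz, rfl⟩
    rw [ZFSet.mem_sep] at hz
    obtain ⟨p, hp, hpair⟩ := hz.2
    refine ⟨z, p, hp, hpair, ?_⟩
    rw [dif_pos (transGen_mem_of_pair_mem hpair)]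
  · rintro ⟨τ, p, hp, hpair, rfl⟩
    refine ⟨τ, ?_, ?_⟩
    · rw [ZFSet.mem_sep]
      refine ⟨?_, p, hp, hpair⟩
      rw [ZFSet.mem_sUnion]
      refine ⟨{τ}, ?_, by simp⟩
      rw [ZFSet.mem_sUnion]
      exact ⟨ZFSet.pair τ p, hpair, by simp [ZFSet.pair]⟩
    · rw [dif_pos (transGen_mem_of_pair_mem hpair)]

theorem val_mem_val {G : Set ZFSet} {σ τ p : ZFSet} (hp : p ∈ G) (h : ZFSet.pair τ p ∈ σ) :
    val G τ ∈ val G σ :=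
  mem_val.2 ⟨τ, p, hp, h, rfl⟩

theorem IsName.of_pair_mem {P : Set ZFSet} {σ ρ s : ZFSet} (h : IsName P σ)
    (hm : ZFSet.pair ρ s ∈ σ) : IsName P ρ ∧ s ∈ P := by
  obtain ⟨_, hshape, hrec⟩ := h
  obtain ⟨τ, p, hpP, hx⟩ := hshape _ hm
  obtain ⟨h1, h2⟩ := ZFSet.pair_injective hx
  exact ⟨hrec _ _ hm, h2 ▸ hpP⟩

theorem rank_lt_of_pair_mem {ρ s σ : ZFSet} (h : ZFSet.pair ρ s ∈ σ) :
    ZFSet.rank ρ < ZFSet.rank σ := by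
  have h1 : ρ ∈ ({ρ} : ZFSet) := by simp
  have h2 : ({ρ} : ZFSet) ∈ ZFSet.pair ρ s := by simp [ZFSet.pair]
  exact lt_trans (lt_trans (ZFSet.rank_lt_of_mem h1) (ZFSet.rank_lt_of_mem h2))
    (ZFSet.rank_lt_of_mem h)

variable {M : ZFSet} {C : Set (Set ZFSet)}

theorem mem_of_pair_mem_of_mem (hM : M.IsTransitive) {ρ s σ : ZFSet}
    (h : ZFSet.pair ρ s ∈ σ) (hσ : σ ∈ M) : ρ ∈ M ∧ s ∈ M := by
  have hp : ZFSet.pair ρ s ∈ M := hM.subset_of_mem hσ h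
  have h2 : ({ρ, s} : ZFSet) ∈ M := hM.subset_of_mem hp (by simp [ZFSet.pair])
  exact ⟨hM.subset_of_mem h2 (by simp), hM.subset_of_mem h2 (by simp)⟩

/-- Filter refinement: common lower bound of two elements of a generic filter. -/
theorem IsGeneric.descend₂ {F : ClassForcing M C} {G : Set ZFSet} (hG : IsGeneric F G)
    {p q : ZFSet} (hp : p ∈ G) (hq : q ∈ G) :
    ∃ r ∈ G, r ∈ F.P ∧ F.le r p ∧ F.le r q := by
  obtain ⟨r, hr, h1, h2⟩ := hG.compat p hp q hq
  exact ⟨r, hr, hG.sub hr, h1, h2⟩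

theorem IsGeneric.descend₃ {F : ClassForcing M C} {G : Set ZFSet} (hG : IsGeneric F G)
    {p q r : ZFSet} (hp : p ∈ G) (hq : q ∈ G) (hr : r ∈ G) :
    ∃ s ∈ G, s ∈ F.P ∧ F.le s p ∧ F.le s q ∧ F.le s r := by
  obtain ⟨t, ht, htP, h1, h2⟩ := hG.descend₂ hp hq
  obtain ⟨s, hs, hsP, h3, h4⟩ := hG.descend₂ ht hr
  exact ⟨s, hs, hsP, F.le_trans s hsP t htP p (hG.sub hp) h3 h1,
    F.le_trans s hsP t htP q (hG.sub hq) h3 h2, h4⟩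

theorem Forces.mono {F : ClassForcing M C} {κ n : ℕ} {φ : CFml κ n}
    {Γ : Fin κ → Set ZFSet} {p q : ZFSet} {σ : Fin n → ZFSet}
    (h : Forces F φ Γ p σ) (hp : p ∈ F.P) (hq : q ∈ F.P) (hle : F.le q p) :
    Forces F φ Γ q σ :=
  fun G hG hqG => h G hG (hG.upward q hqG p hp hle)


/-- Existence of generic filters over a countable model. -/
theorem exists_generic (hMC : GBminus M C) (F : ClassForcing M C) {p : ZFSet}
    (hp : p ∈ F.P) : ∃ G : Set ZFSet, IsGeneric F G ∧ p ∈ G := by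
  classical
  set Ds : Set (Set ZFSet) := {D | D ∈ C ∧ D ⊆ F.P ∧ DenseIn F.P F.le D} with hDs
  have hPD : F.P ∈ Ds := ⟨F.P_mem, le_refl _, fun q hq => ⟨q, hq, hq, F.le_refl q hq⟩⟩
  obtain ⟨f, hf⟩ := (hMC.countableC.mono (fun D hD => hD.1)).exists_eq_range ⟨_, hPD⟩
  have step : ∀ (n : ℕ) (x : ZFSet), x ∈ F.P →
      ∃ q, q ∈ f n ∧ q ∈ F.P ∧ F.le q x := by
    intro n x hx
    have hfn : f n ∈ Ds := by rw [hf]; exact ⟨n, rfl⟩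
    obtain ⟨q, hq1, hq2, hq3⟩ := hfn.2.2 x hx
    exact ⟨q, hq1, hq2, hq3⟩
  let g : ℕ → {x : ZFSet // x ∈ F.P} := fun n => Nat.rec ⟨p, hp⟩
    (fun n ih => ⟨Classical.choose (step n ih.1 ih.2),
      (Classical.choose_spec (step n ih.1 ih.2)).2.1⟩) n
  have hg0 : (g 0).1 = p := rfl
  have hgs : ∀ n, (g (n + 1)).1 ∈ f n ∧ F.le (g (n + 1)).1 (g n).1 := by
    intro n
    exact ⟨(Classical.choose_spec (step n (g n).1 (g n).2)).1,
      (Classical.choose_spec (step n (g n).1 (g n).2)).2.2⟩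
  have hmono : ∀ n m, n ≤ m → F.le (g m).1 (g n).1 := by
    intro n m hnm
    induction m, hnm using Nat.le_induction with
    | base => exact F.le_refl _ (g n).2
    | succ m hnm ih =>
      exact F.le_trans _ (g (m+1)).2 _ (g m).2 _ (g n).2 (hgs m).2 ih
  refine ⟨{x | x ∈ F.P ∧ ∃ n, F.le (g n).1 x}, ⟨?_, ?_, ?_, ?_⟩, hp, 0, hg0 ▸ F.le_refl p hp⟩
  · exact fun x hx => hx.1
  · rintro x ⟨hxP, n, hn⟩ q hq hle
    exact ⟨hq, n, F.le_trans _ (g n).2 _ hxP _ hq hn hle⟩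
  · rintro x ⟨hxP, n, hn⟩ y ⟨hyP, m, hm⟩
    rcases le_total n m with h | h
    · exact ⟨(g m).1, ⟨(g m).2, m, F.le_refl _ (g m).2⟩,
        F.le_trans _ (g m).2 _ (g n).2 _ hxP (hmono n m h) hn, hm⟩
    · exact ⟨(g n).1, ⟨(g n).2, n, F.le_refl _ (g n).2⟩, hn,
        F.le_trans _ (g n).2 _ (g m).2 _ hyP (hmono m n h) hm⟩
  · intro D hD hDP hdense
    have : D ∈ Ds := ⟨hD, hDP, hdense⟩
    rw [hf] at this
    obtain ⟨n, rfl⟩ := this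
    exact ⟨(g (n+1)).1, (hgs n).1, (g (n+1)).2, n+1, F.le_refl _ (g (n+1)).2⟩



/-! ### Unfolding lemmas for `SatC` -/

section SatCUnfold
variable {D : Set ZFSet} {κ n : ℕ} {Γ : Fin κ → Set ZFSet} {v : Fin n → ZFSet}

@[simp] theorem satC_mem (i j : Fin n) : SatC D Γ (CFml.mem i j) v ↔ v i ∈ v j := by rw [SatC]
@[simp] theorem satC_eq (i j : Fin n) : SatC D Γ (CFml.eq i j) v ↔ v i = v j := by rw [SatC]
@[simp] theorem satC_cls (X : Fin κ) (i : Fin n) : SatC D Γ (CFml.cls X i) v ↔ v i ∈ Γ X := by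
  rw [SatC]
@[simp] theorem satC_not (φ : CFml κ n) : SatC D Γ (CFml.not φ) v ↔ ¬ SatC D Γ φ v := by rw [SatC]
@[simp] theorem satC_or (φ ψ : CFml κ n) :
    SatC D Γ (CFml.or φ ψ) v ↔ SatC D Γ φ v ∨ SatC D Γ ψ v := by rw [SatC]
@[simp] theorem satC_ex (φ : CFml κ (n+1)) :
    SatC D Γ (CFml.ex φ) v ↔ ∃ x ∈ D, SatC D Γ φ (Fin.snoc v x) := by rw [SatC]

end SatCUnfold

/-! ### Renaming of formulas -/

/-- Rename/substitute variables in a formula. -/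
def CFml.rename : ∀ {κ n m : ℕ}, (Fin n → Fin m) → CFml κ n → CFml κ m
  | _, _, _, f, .mem i j => .mem (f i) (f j)
  | _, _, _, f, .eq i j => .eq (f i) (f j)
  | _, _, _, f, .cls X i => .cls X (f i)
  | _, _, _, f, .not φ => .not (rename f φ)
  | _, _, _, f, .or φ ψ => .or (rename f φ) (rename f ψ)
  | _, _, _, f, .ex φ =>
      .ex (rename (Fin.snoc (Fin.castSucc ∘ f) (Fin.last _)) φ)

theorem snoc_comp_snoc {n m : ℕ} (f : Fin n → Fin m) (v : Fin m → ZFSet) (x : ZFSet) :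
    (Fin.snoc v x : Fin (m+1) → ZFSet) ∘ (Fin.snoc (Fin.castSucc ∘ f) (Fin.last m)) =
      Fin.snoc (v ∘ f) x := by
  funext i
  refine Fin.lastCases ?_ (fun j => ?_) i
  · simp
  · simp [Fin.snoc_castSucc]

theorem SatC_rename (D : Set ZFSet) : ∀ {κ n m : ℕ} (f : Fin n → Fin m) (φ : CFml κ n)
    (Γ : Fin κ → Set ZFSet) (v : Fin m → ZFSet),
    SatC D Γ (CFml.rename f φ) v ↔ SatC D Γ φ (v ∘ f)
  | _, _, _, f, .mem i j, Γ, v => by simp [CFml.rename]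
  | _, _, _, f, .eq i j, Γ, v => by simp [CFml.rename]
  | _, _, _, f, .cls X i, Γ, v => by simp [CFml.rename]
  | _, _, _, f, .not φ, Γ, v => by
      simp only [CFml.rename, satC_not]
      exact not_congr (SatC_rename D f φ Γ v)
  | _, _, _, f, .or φ ψ, Γ, v => by
      simp only [CFml.rename, satC_or]
      exact or_congr (SatC_rename D f φ Γ v) (SatC_rename D f ψ Γ v)
  | _, _, _, f, .ex φ, Γ, v => by
      simp only [CFml.rename, satC_ex]
      refine exists_congr fun x => and_congr_right fun _ => ?_
      rw [SatC_rename D _ φ Γ (Fin.snoc v x), snoc_comp_snoc]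

/-! ### Formulas bundled with their semantics over `M` -/

/-- A formula together with a semantic predicate which it defines over `M`
(for class interpretations contained in `M` and assignments into `M`). -/
structure DF (M : ZFSet) (κ n : ℕ) where
  fml : CFml κ n
  sem : (Fin κ → Set ZFSet) → (Fin n → ZFSet) → Prop
  h : ∀ Γ : Fin κ → Set ZFSet, (∀ i, Γ i ⊆ M.toSet) → ∀ v : Fin n → ZFSet,
    (∀ i, v i ∈ M) → (SatC M.toSet Γ (fml) v ↔ sem Γ v)

theorem snoc_mem_M {M : ZFSet} {n : ℕ} {v : Fin n → ZFSet} {x : ZFSet}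
    (hv : ∀ i, v i ∈ M) (hx : x ∈ M) : ∀ i, (Fin.snoc v x : Fin (n+1) → ZFSet) i ∈ M :=
  fun i => Fin.lastCases (by simpa using hx) (fun j => by simpa using hv j) i

namespace DF

variable {M : ZFSet} {κ n m : ℕ}

def memv (i j : Fin n) : DF M κ n := ⟨.mem i j, fun _ v => v i ∈ v j, fun _ _ _ _ => satC_mem i j⟩
def eqv (i j : Fin n) : DF M κ n := ⟨.eq i j, fun _ v => v i = v j, fun _ _ _ _ => satC_eq i j⟩
def clsv (X : Fin κ) (i : Fin n) : DF M κ n :=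
  ⟨.cls X i, fun Γ v => v i ∈ Γ X, fun _ _ _ _ => satC_cls X i⟩

def not (φ : DF M κ n) : DF M κ n :=
  ⟨.not φ.fml, fun Γ v => ¬ φ.sem Γ v, fun Γ hΓ v hv => by
    rw [satC_not]; exact not_congr (φ.h Γ hΓ v hv)⟩

def or (φ ψ : DF M κ n) : DF M κ n :=
  ⟨.or φ.fml ψ.fml, fun Γ v => φ.sem Γ v ∨ ψ.sem Γ v,
    fun Γ hΓ v hv => by rw [satC_or]; exact or_congr (φ.h Γ hΓ v hv) (ψ.h Γ hΓ v hv)⟩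

def and (φ ψ : DF M κ n) : DF M κ n :=
  ⟨.not (.or (.not φ.fml) (.not ψ.fml)), fun Γ v => φ.sem Γ v ∧ ψ.sem Γ v, by
    intro Γ hΓ v hv
    simp only [satC_not, satC_or]
    rw [φ.h Γ hΓ v hv, ψ.h Γ hΓ v hv]; tauto⟩

def imp (φ ψ : DF M κ n) : DF M κ n :=
  ⟨.or (.not φ.fml) ψ.fml, fun Γ v => φ.sem Γ v → ψ.sem Γ v, by
    intro Γ hΓ v hv
    simp only [satC_not, satC_or]
    rw [φ.h Γ hΓ v hv, ψ.h Γ hΓ v hv]; tauto⟩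

/-- Replace the semantics by an equivalent one. -/
def mapSem (φ : DF M κ n) (s : (Fin κ → Set ZFSet) → (Fin n → ZFSet) → Prop)
    (hs : ∀ Γ : Fin κ → Set ZFSet, (∀ i, Γ i ⊆ M.toSet) → ∀ v : Fin n → ZFSet,
      (∀ i, v i ∈ M) → (φ.sem Γ v ↔ s Γ v)) : DF M κ n :=
  ⟨φ.fml, s, fun Γ hΓ v hv => (φ.h Γ hΓ v hv).trans (hs Γ hΓ v hv)⟩

def iff (φ ψ : DF M κ n) : DF M κ n :=
  (imp φ ψ).and (imp ψ φ) |>.mapSem (fun Γ v => φ.sem Γ v ↔ ψ.sem Γ v)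
    (fun _ _ _ _ => by simp only [DF.and, DF.imp]; tauto)

def ex (φ : DF M κ (n+1)) : DF M κ n :=
  ⟨.ex φ.fml, fun Γ v => ∃ x ∈ M, φ.sem Γ (Fin.snoc v x), by
    intro Γ hΓ v hv
    rw [satC_ex]
    exact exists_congr fun x => and_congr_right fun hx =>
      φ.h Γ hΓ _ (snoc_mem_M hv hx)⟩

def all (φ : DF M κ (n+1)) : DF M κ n :=
  ⟨.not (.ex (.not φ.fml)), fun Γ v => ∀ x ∈ M, φ.sem Γ (Fin.snoc v x), by
    intro Γ hΓ v hv
    simp only [satC_not, satC_ex]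
    push_neg
    exact forall_congr' fun x => forall_congr' fun hx =>
      φ.h Γ hΓ _ (snoc_mem_M hv hx)⟩

def rename (f : Fin n → Fin m) (φ : DF M κ n) : DF M κ m :=
  ⟨CFml.rename f φ.fml, fun Γ v => φ.sem Γ (v ∘ f), by
    intro Γ hΓ v hv
    rw [SatC_rename]
    exact φ.h Γ hΓ _ (fun i => hv (f i))⟩

end DF


/-! ### Derived formulas -/

section Derived

variable {M : ZFSet} {C : Set (Set ZFSet)} {κ n m : ℕ}

/-- `M` is closed under unordered pairs. -/
def PairClosed (M : ZFSet) : Prop := ∀ x ∈ M, ∀ y ∈ M, ({x, y} : ZFSet) ∈ M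

theorem PairClosed.pair_mem {M : ZFSet} (hMp : PairClosed M) {a b : ZFSet}
    (ha : a ∈ M) (hb : b ∈ M) : ZFSet.pair a b ∈ M := by
  have h1 : ({a} : ZFSet) ∈ M := by simpa using hMp a ha a ha
  exact hMp _ h1 _ (hMp a ha b hb)

/-- "v0 = ∅". -/
def dfEmpty (hMt : M.IsTransitive) : DF M κ 1 :=
  (DF.all ((DF.memv 1 0).not)).mapSem (fun _ v => v 0 = ∅) (by
    intro Γ _ v hv
    show (∀ x ∈ M, ¬ x ∈ v 0) ↔ v 0 = ∅
    constructor
    · intro hx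
      apply ZFSet.ext; intro y
      simp only [ZFSet.notMem_empty, iff_false]
      intro hy
      exact hx y (hMt.subset_of_mem (hv 0) hy) hy
    · intro h x _ hx
      rw [h] at hx
      simp at hx)

/-- "v0 = {v1, v2}". -/
def dfUPair (hMt : M.IsTransitive) (hMp : PairClosed M) : DF M κ 3 :=
  (DF.all ((DF.memv 3 0).iff ((DF.eqv 3 1).or (DF.eqv 3 2)))).mapSem
    (fun _ v => v 0 = ({v 1, v 2} : ZFSet)) (by
    intro Γ _ v hv
    show (∀ x ∈ M, x ∈ v 0 ↔ (x = v 1 ∨ x = v 2)) ↔ v 0 = ({v 1, v 2} : ZFSet)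
    constructor
    · intro hx
      apply ZFSet.ext; intro y
      constructor
      · intro hy
        have := (hx y (hMt.subset_of_mem (hv 0) hy)).1 hy
        simpa using this
      · intro hy
        have hyM : y ∈ M := by
          rcases ZFSet.mem_pair.1 hy with rfl | rfl
          · exact hv 1
          · exact hv 2
        exact (hx y hyM).2 (by simpa using hy)
    · intro h x _
      rw [h]
      simp)

/-- "v0 = pair v1 v2" (Kuratowski pair). -/
def dfKPair (hMt : M.IsTransitive) (hMp : PairClosed M) : DF M κ 3 :=
  (DF.all ((DF.memv 3 0).iff ((DF.rename ![3, 1, 1] (dfUPair hMt hMp)).or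
      (DF.rename ![3, 1, 2] (dfUPair hMt hMp))))).mapSem
    (fun _ v => v 0 = ZFSet.pair (v 1) (v 2)) (by
    intro Γ _ v hv
    show (∀ x ∈ M, x ∈ v 0 ↔ (x = ({v 1, v 1} : ZFSet) ∨ x = ({v 1, v 2} : ZFSet))) ↔
      v 0 = ZFSet.pair (v 1) (v 2)
    have hpair : ZFSet.pair (v 1) (v 2) = ({{v 1, v 1}, {v 1, v 2}} : ZFSet) := by
      simp [ZFSet.pair]
    constructor
    · intro hx
      apply ZFSet.ext; intro y
      rw [hpair]
      constructor
      · intro hy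
        have := (hx y (hMt.subset_of_mem (hv 0) hy)).1 hy
        simpa using this
      · intro hy
        have hyM : y ∈ M := by
          rcases ZFSet.mem_pair.1 hy with rfl | rfl
          · exact hMp _ (hv 1) _ (hv 1)
          · exact hMp _ (hv 1) _ (hv 2)
        exact (hx y hyM).2 (by simpa using hy)
    · intro h x _
      rw [h, hpair]
      simp)

/-- "pair v1 v2 ∈ v0". -/
def dfPairMemVar (hMt : M.IsTransitive) (hMp : PairClosed M) : DF M κ 3 :=
  (DF.ex ((DF.rename ![3, 1, 2] (dfKPair hMt hMp)).and (DF.memv 3 0))).mapSem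
    (fun _ v => ZFSet.pair (v 1) (v 2) ∈ v 0) (by
    intro Γ _ v hv
    show (∃ x ∈ M, x = ZFSet.pair (v 1) (v 2) ∧ x ∈ v 0) ↔ ZFSet.pair (v 1) (v 2) ∈ v 0
    constructor
    · rintro ⟨x, _, rfl, hx⟩
      exact hx
    · intro hx
      exact ⟨_, hMp.pair_mem (hv 1) (hv 2), rfl, hx⟩)

/-- "pair v0 v1 ∈ Γ X". -/
def dfPairMemCls (hMt : M.IsTransitive) (hMp : PairClosed M) (X : Fin κ) : DF M κ 2 :=
  (DF.ex ((DF.rename ![2, 0, 1] (dfKPair hMt hMp)).and (DF.clsv X 2))).mapSem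
    (fun Γ v => ZFSet.pair (v 0) (v 1) ∈ Γ X) (by
    intro Γ _ v hv
    show (∃ x ∈ M, x = ZFSet.pair (v 0) (v 1) ∧ x ∈ Γ X) ↔ ZFSet.pair (v 0) (v 1) ∈ Γ X
    constructor
    · rintro ⟨x, _, rfl, hx⟩
      exact hx
    · intro hx
      exact ⟨_, hMp.pair_mem (hv 0) (hv 1), rfl, hx⟩)

/-- The coding of a pair of sets used in the forcing-relation classes. -/
def tuple2 (a b : ZFSet) : ZFSet := ZFSet.pair a (ZFSet.pair b ∅)

theorem tupleZF_two (a b : ZFSet) : tupleZF ![a, b] = tuple2 a b := rfl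

theorem tuple2_mem (hMp : PairClosed M) (hM0 : (∅ : ZFSet) ∈ M) {a b : ZFSet}
    (ha : a ∈ M) (hb : b ∈ M) : tuple2 a b ∈ M :=
  hMp.pair_mem ha (hMp.pair_mem hb hM0)

theorem tuple2_injective {a b a' b' : ZFSet} (h : tuple2 a b = tuple2 a' b') :
    a = a' ∧ b = b' := by
  obtain ⟨h1, h2⟩ := ZFSet.pair_injective h
  exact ⟨h1, (ZFSet.pair_injective h2).1⟩

/-- "v0 = tuple2 v1 v2". -/
def dfTuple2 (hMt : M.IsTransitive) (hMp : PairClosed M) (hM0 : (∅ : ZFSet) ∈ M) :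
    DF M κ 3 :=
  (DF.ex (DF.ex ((((DF.rename ![3] (dfEmpty hMt)).and
      (DF.rename ![4, 2, 3] (dfKPair hMt hMp))).and
      (DF.rename ![0, 1, 4] (dfKPair hMt hMp)))))).mapSem
    (fun _ v => v 0 = tuple2 (v 1) (v 2)) (by
    intro Γ _ v hv
    show (∃ e ∈ M, ∃ w ∈ M, (e = ∅ ∧ w = ZFSet.pair (v 2) e) ∧ v 0 = ZFSet.pair (v 1) w) ↔
      v 0 = tuple2 (v 1) (v 2)
    constructor
    · rintro ⟨e, _, w, _, ⟨rfl, rfl⟩, h⟩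
      exact h
    · intro h
      exact ⟨∅, hM0, _, hMp.pair_mem (hv 2) hM0, ⟨rfl, rfl⟩, h⟩)

/-- "pair v0 (tuple2 v1 v2) ∈ Γ X": the basic forcing-class atom. -/
def dfForcesPair (hMt : M.IsTransitive) (hMp : PairClosed M) (hM0 : (∅ : ZFSet) ∈ M)
    (X : Fin κ) : DF M κ 3 :=
  (DF.ex ((DF.rename ![3, 1, 2] (dfTuple2 hMt hMp hM0)).and
      (DF.rename ![0, 3] (dfPairMemCls hMt hMp X)))).mapSem
    (fun Γ v => ZFSet.pair (v 0) (tuple2 (v 1) (v 2)) ∈ Γ X) (by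
    intro Γ _ v hv
    show (∃ t ∈ M, t = tuple2 (v 1) (v 2) ∧ ZFSet.pair (v 0) t ∈ Γ X) ↔ _
    constructor
    · rintro ⟨t, _, rfl, ht⟩
      exact ht
    · intro hx
      exact ⟨_, tuple2_mem hMp hM0 (hv 1) (hv 2), rfl, hx⟩)

theorem tupleZF_mem (hMp : PairClosed M) (hM0 : (∅ : ZFSet) ∈ M) :
    ∀ {k : ℕ} (v : Fin k → ZFSet), (∀ i, v i ∈ M) → tupleZF v ∈ M
  | 0, _, _ => hM0
  | k + 1, v, hv =>
      hMp.pair_mem (hv 0) (tupleZF_mem hMp hM0 (fun i => v i.succ) (fun i => hv i.succ))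

theorem tupleZF_injective : ∀ {k : ℕ} {v w : Fin k → ZFSet}, tupleZF v = tupleZF w → v = w
  | 0, v, w, _ => funext fun i => i.elim0
  | k + 1, v, w, h => by
      obtain ⟨h1, h2⟩ := ZFSet.pair_injective h
      have := tupleZF_injective h2
      funext i
      refine Fin.cases h1 (fun j => ?_) i
      exact congrFun this j

/-- `NameSem A one σ`: the uniform first-order description of "σ is a `P`-name in `M`"
using an atomic forcing class `A` and the maximal condition `one`. -/
def NameSem (M : ZFSet) (A : Set ZFSet) (one : ZFSet) (σ : ZFSet) : Prop :=
  ∃ τ' ∈ M, ZFSet.pair one (tuple2 σ τ') ∈ A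

/-- "NameSem (Γ X) v1 (v0)", with `v1` the parameter slot for `one`. -/
def dfName (hMt : M.IsTransitive) (hMp : PairClosed M) (hM0 : (∅ : ZFSet) ∈ M)
    (X : Fin κ) : DF M κ 2 :=
  (DF.ex (DF.rename ![1, 0, 2] (dfForcesPair hMt hMp hM0 X))).mapSem
    (fun Γ v => NameSem M (Γ X) (v 1) (v 0)) (fun _ _ _ _ => Iff.rfl)

/-- `NTsem A one n t`: `t` codes an `n`-tuple of names. -/
def NTsem (M : ZFSet) (A : Set ZFSet) (one : ZFSet) : ℕ → ZFSet → Prop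
  | 0, t => t = ∅
  | n + 1, t => ∃ σ ∈ M, ∃ u ∈ M, (NameSem M A one σ ∧ NTsem M A one n u) ∧
      t = ZFSet.pair σ u

/-- "NTsem (Γ X) v1 n (v0)". -/
def dfNT (hMt : M.IsTransitive) (hMp : PairClosed M) (hM0 : (∅ : ZFSet) ∈ M)
    (X : Fin κ) : (n : ℕ) → DF M κ 2
  | 0 => DF.rename ![0] (dfEmpty hMt)
  | n + 1 =>
    DF.ex (DF.ex (((DF.rename ![2, 1] (dfName hMt hMp hM0 X)).and
        (DF.rename ![3, 1] (dfNT hMt hMp hM0 X n))).and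
        (DF.rename ![0, 2, 3] (dfKPair hMt hMp))))

theorem dfNT_sem (hMt : M.IsTransitive) (hMp : PairClosed M) (hM0 : (∅ : ZFSet) ∈ M)
    (X : Fin κ) : ∀ (n : ℕ) (Γ : Fin κ → Set ZFSet) (v : Fin 2 → ZFSet),
    (dfNT hMt hMp hM0 X n).sem Γ v ↔ NTsem M (Γ X) (v 1) n (v 0)
  | 0, Γ, v => Iff.rfl
  | n + 1, Γ, v => by
    show (∃ σ ∈ M, ∃ u ∈ M, ((dfName hMt hMp hM0 X).sem Γ _ ∧
        (dfNT hMt hMp hM0 X n).sem Γ _) ∧ _) ↔ _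
    refine exists_congr fun σ => and_congr_right fun _ =>
      exists_congr fun u => and_congr_right fun _ =>
      and_congr (and_congr_right fun _ => ?_) Iff.rfl
    exact dfNT_sem hMt hMp hM0 X n Γ _

/-- Characterization of `NTsem` as coding tuples of names. -/
theorem NTsem_iff {M : ZFSet} (hMp : PairClosed M) (hM0 : (∅ : ZFSet) ∈ M)
    {A : Set ZFSet} {one : ZFSet}
    {Nm : ZFSet → Prop} (hA : ∀ σ, NameSem M A one σ ↔ (σ ∈ M ∧ Nm σ)) :
    ∀ {n : ℕ} {t : ZFSet}, NTsem M A one n t ↔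
      ∃ v : Fin n → ZFSet, (∀ i, v i ∈ M ∧ Nm (v i)) ∧ t = tupleZF v := by
  intro n
  induction n with
  | zero =>
    intro t
    constructor
    · intro h
      exact ⟨fun i => i.elim0, fun i => i.elim0, h⟩
    · rintro ⟨v, _, rfl⟩
      rfl
  | succ n ih =>
    intro t
    constructor
    · rintro ⟨σ, hσM, u, hu, ⟨hname, hnt⟩, rfl⟩
      obtain ⟨w, hw, rfl⟩ := ih.1 hnt
      refine ⟨Fin.cons σ w, fun i => ?_, rfl⟩
      refine Fin.cases ⟨hσM, ((hA σ).1 hname).2⟩ (fun j => by simpa using hw j) i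
    · rintro ⟨v, hv, rfl⟩
      refine ⟨v 0, (hv 0).1, tupleZF (fun i => v i.succ),
        tupleZF_mem hMp hM0 _ (fun i => (hv i.succ).1), ⟨?_, ?_⟩, rfl⟩
      · exact (hA (v 0)).2 (hv 0)
      · exact ih.2 ⟨fun i => v i.succ, fun i => hv i.succ, rfl⟩

/-- `ProjSem i t u`: `u` is the `i`-th component of the coded tuple `t`. -/
def ProjSem (M : ZFSet) : ℕ → ZFSet → ZFSet → Prop
  | 0, t, u => ∃ w ∈ M, t = ZFSet.pair u w
  | i + 1, t, u => ∃ a ∈ M, ∃ w ∈ M, t = ZFSet.pair a w ∧ ProjSem M i w u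

/-- "ProjSem i (v0) (v1)". -/
def dfProj (hMt : M.IsTransitive) (hMp : PairClosed M) : (i : ℕ) → DF M κ 2
  | 0 => DF.ex (DF.rename ![0, 1, 2] (dfKPair hMt hMp))
  | i + 1 =>
    DF.ex (DF.ex ((DF.rename ![0, 2, 3] (dfKPair hMt hMp)).and
        (DF.rename ![3, 1] (dfProj hMt hMp i))))

theorem dfProj_sem (hMt : M.IsTransitive) (hMp : PairClosed M) :
    ∀ (i : ℕ) (Γ : Fin κ → Set ZFSet) (v : Fin 2 → ZFSet),
    (dfProj hMt hMp i).sem Γ v ↔ ProjSem M i (v 0) (v 1)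
  | 0, Γ, v => Iff.rfl
  | i + 1, Γ, v => by
    show (∃ a ∈ M, ∃ w ∈ M, _ ∧ (dfProj hMt hMp i).sem Γ _) ↔ _
    refine exists_congr fun a => and_congr_right fun _ =>
      exists_congr fun w => and_congr_right fun _ =>
      and_congr Iff.rfl ?_
    exact dfProj_sem hMt hMp i Γ _

theorem ProjSem_iff (hMp : PairClosed M) (hM0 : (∅ : ZFSet) ∈ M) :
    ∀ {n : ℕ} (v : Fin n → ZFSet), (∀ j, v j ∈ M) → ∀ (i : Fin n) (u : ZFSet),
      (ProjSem M i.val (tupleZF v) u ↔ u = v i) := by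
  intro n
  induction n with
  | zero => exact fun _ _ i => i.elim0
  | succ n ih =>
    intro v hv i u
    refine Fin.cases ?_ (fun j => ?_) i
    · show (∃ w ∈ M, tupleZF v = ZFSet.pair u w) ↔ u = v 0
      constructor
      · rintro ⟨w, _, hw⟩
        exact (ZFSet.pair_injective hw).1.symm
      · rintro rfl
        exact ⟨_, tupleZF_mem hMp hM0 _ (fun j => hv j.succ), rfl⟩
    · show (∃ a ∈ M, ∃ w ∈ M, tupleZF v = ZFSet.pair a w ∧ ProjSem M j.val w u) ↔ _
      constructor
      · rintro ⟨a, _, w, hwM, hw, hp⟩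
        obtain ⟨h1, h2⟩ := ZFSet.pair_injective hw.symm
        rw [h2] at hp
        exact (ih _ (fun j => hv j.succ) j u).1 hp
      · intro hu
        refine ⟨v 0, hv 0, tupleZF (fun k => v k.succ),
          tupleZF_mem hMp hM0 _ (fun k => hv k.succ), rfl, ?_⟩
        exact (ih _ (fun k => hv k.succ) j u).2 hu

/-- `SnocSem n t μ t'`: if `t` codes an `n`-tuple `v`, then `t'` codes `v ++ [μ]`. -/
def SnocSem (M : ZFSet) : ℕ → ZFSet → ZFSet → ZFSet → Prop
  | 0, _, μ, t' => t' = ZFSet.pair μ ∅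
  | n + 1, t, μ, t' => ∃ a ∈ M, ∃ w ∈ M, ∃ w' ∈ M,
      (t = ZFSet.pair a w ∧ t' = ZFSet.pair a w') ∧ SnocSem M n w μ w'

/-- "SnocSem n (v0) (v1) (v2)". -/
def dfSnoc (hMt : M.IsTransitive) (hMp : PairClosed M) (hM0 : (∅ : ZFSet) ∈ M) :
    (n : ℕ) → DF M κ 3
  | 0 => DF.ex ((DF.rename ![3] (dfEmpty hMt)).and
      (DF.rename ![2, 1, 3] (dfKPair hMt hMp)))
  | n + 1 =>
    DF.ex (DF.ex (DF.ex (((DF.rename ![0, 3, 4] (dfKPair hMt hMp)).and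
        (DF.rename ![2, 3, 5] (dfKPair hMt hMp))).and
        (DF.rename ![4, 1, 5] (dfSnoc hMt hMp hM0 n)))))

theorem dfSnoc_sem (hMt : M.IsTransitive) (hMp : PairClosed M) (hM0 : (∅ : ZFSet) ∈ M) :
    ∀ (n : ℕ) (Γ : Fin κ → Set ZFSet) (v : Fin 3 → ZFSet),
    (dfSnoc hMt hMp hM0 n).sem Γ v ↔ SnocSem M n (v 0) (v 1) (v 2)
  | 0, Γ, v => by
    show (∃ e ∈ M, e = ∅ ∧ v 2 = ZFSet.pair (v 1) e) ↔ v 2 = ZFSet.pair (v 1) ∅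
    constructor
    · rintro ⟨e, _, rfl, h⟩
      exact h
    · intro h
      exact ⟨∅, hM0, rfl, h⟩
  | n + 1, Γ, v => by
    show (∃ a ∈ M, ∃ w ∈ M, ∃ w' ∈ M, (_ ∧ _) ∧ (dfSnoc hMt hMp hM0 n).sem Γ _) ↔ _
    refine exists_congr fun a => and_congr_right fun _ =>
      exists_congr fun w => and_congr_right fun _ =>
      exists_congr fun w' => and_congr_right fun _ =>
      and_congr Iff.rfl ?_
    exact dfSnoc_sem hMt hMp hM0 n Γ _

theorem tupleZF_snoc {n : ℕ} (v : Fin n → ZFSet) (μ : ZFSet) :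
    tupleZF (Fin.snoc v μ : Fin (n+1) → ZFSet) =
      ZFSet.pair ((Fin.snoc v μ : Fin (n+1) → ZFSet) 0)
        (tupleZF (fun i : Fin n => (Fin.snoc v μ : Fin (n+1) → ZFSet) i.succ)) := rfl

theorem snoc_zero' {n : ℕ} (v : Fin (n+1) → ZFSet) (μ : ZFSet) :
    (Fin.snoc v μ : Fin (n+2) → ZFSet) 0 = v 0 := by
  have := Fin.snoc_castSucc (α := fun _ => ZFSet) (x := μ) (p := v) (i := (0 : Fin (n+1)))
  simpa using this

theorem snoc_tail {n : ℕ} (v : Fin (n+1) → ZFSet) (μ : ZFSet) :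
    (fun i : Fin (n+1) => (Fin.snoc v μ : Fin (n+2) → ZFSet) i.succ) =
      (Fin.snoc (fun i : Fin n => v i.succ) μ : Fin (n+1) → ZFSet) := by
  funext i
  refine Fin.lastCases ?_ (fun j => ?_) i
  · rw [Fin.succ_last]
    simp
  · rw [Fin.succ_castSucc, Fin.snoc_castSucc]
    simp

theorem tupleZF_snoc_eq {n : ℕ} (v : Fin (n+1) → ZFSet) (μ : ZFSet) :
    tupleZF (Fin.snoc v μ : Fin (n+2) → ZFSet) =
      ZFSet.pair (v 0) (tupleZF (Fin.snoc (fun i : Fin n => v i.succ) μ : Fin (n+1) → ZFSet)) := by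
  rw [tupleZF_snoc, snoc_zero', snoc_tail]

theorem SnocSem_iff (hMp : PairClosed M) (hM0 : (∅ : ZFSet) ∈ M) {μ : ZFSet} (hμ : μ ∈ M) :
    ∀ {n : ℕ} (v : Fin n → ZFSet), (∀ j, v j ∈ M) → ∀ (t' : ZFSet),
      (SnocSem M n (tupleZF v) μ t' ↔ t' = tupleZF (Fin.snoc v μ : Fin (n+1) → ZFSet)) := by
  intro n
  induction n with
  | zero =>
    intro v _ t'
    show t' = ZFSet.pair μ ∅ ↔ _
    have : tupleZF (Fin.snoc v μ : Fin 1 → ZFSet) = ZFSet.pair μ ∅ := rfl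
    rw [this]
  | succ n ih =>
    intro v hv t'
    rw [tupleZF_snoc_eq]
    constructor
    · rintro ⟨a, _, w, hwM, w', hw'M, ⟨hw, rfl⟩, hs⟩
      obtain ⟨rfl, h2⟩ := ZFSet.pair_injective hw.symm
      rw [h2] at hs
      rw [(ih _ (fun j => hv j.succ) w').1 hs]
    · rintro rfl
      exact ⟨v 0, hv 0, tupleZF (fun i => v i.succ),
        tupleZF_mem hMp hM0 _ (fun i => hv i.succ),
        tupleZF (Fin.snoc (fun i : Fin n => v i.succ) μ : Fin (n+1) → ZFSet),
        tupleZF_mem hMp hM0 _ (fun i => snoc_mem_M (fun j => hv j.succ) hμ i),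
        ⟨rfl, rfl⟩, (ih _ (fun j => hv j.succ) _).2 rfl⟩

end Derived


/-! ### Forcing-side notions -/

section ForcingSide

variable {M : ZFSet} {C : Set (Set ZFSet)}

/-- The graph of the ordering as a class. -/
def LeCls (F : ClassForcing M C) : Set ZFSet :=
  {x : ZFSet | ∃ p ∈ F.P, ∃ q ∈ F.P, F.le p q ∧ x = ZFSet.pair p q}

theorem LeCls_mem (F : ClassForcing M C) : LeCls F ∈ C := F.le_mem

/-- `a` is a condition below the condition `b`. -/
def leP (F : ClassForcing M C) (a b : ZFSet) : Prop := a ∈ F.P ∧ b ∈ F.P ∧ F.le a b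

theorem pair_mem_LeCls {F : ClassForcing M C} {a b : ZFSet} :
    ZFSet.pair a b ∈ LeCls F ↔ leP F a b := by
  constructor
  · rintro ⟨p, hp, q, hq, hle, hx⟩
    obtain ⟨rfl, rfl⟩ := ZFSet.pair_injective hx.symm
    exact ⟨hp, hq, hle⟩
  · rintro ⟨ha, hb, hle⟩
    exact ⟨a, ha, b, hb, hle, rfl⟩

theorem leP_refl {F : ClassForcing M C} {a : ZFSet} (h : a ∈ F.P) : leP F a a :=
  ⟨h, h, F.le_refl a h⟩

theorem leP_trans {F : ClassForcing M C} {a b c : ZFSet} (h1 : leP F a b) (h2 : leP F b c) :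
    leP F a c :=
  ⟨h1.1, h2.2.1, F.le_trans a h1.1 b h1.2.1 c h2.2.1 h1.2.2 h2.2.2⟩

/-- `σ` is a `P`-name lying in `M`. -/
def NameM (M : ZFSet) (P : Set ZFSet) (σ : ZFSet) : Prop := σ ∈ M ∧ IsName P σ

/-- The canonical "forcing class" of a formula, as in `DefLemma`. -/
def defCls (F : ClassForcing M C) {κ n : ℕ} (φ : CFml κ n) (Γ : Fin κ → Set ZFSet) :
    Set ZFSet :=
  {x : ZFSet | ∃ p ∈ F.P, ∃ σ : Fin n → ZFSet,
    (∀ i, σ i ∈ M ∧ IsName F.P (σ i)) ∧ Forces F φ Γ p σ ∧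
    x = ZFSet.pair p (tupleZF σ)}

theorem defLemma_iff {F : ClassForcing M C} {κ n : ℕ} {φ : CFml κ n} :
    DefLemma F φ ↔ ∀ Γ : Fin κ → Set ZFSet, (∀ i, IsClassName M C F.P (Γ i)) →
      defCls F φ Γ ∈ C := Iff.rfl

theorem mem_defCls {F : ClassForcing M C} {κ n : ℕ} {φ : CFml κ n}
    {Γ : Fin κ → Set ZFSet} {p : ZFSet} {σ : Fin n → ZFSet}
    (hσ : ∀ i, σ i ∈ M ∧ IsName F.P (σ i)) :
    ZFSet.pair p (tupleZF σ) ∈ defCls F φ Γ ↔ p ∈ F.P ∧ Forces F φ Γ p σ := by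
  constructor
  · rintro ⟨p', hp', σ', hσ', hF, hx⟩
    obtain ⟨rfl, h2⟩ := ZFSet.pair_injective hx.symm
    obtain rfl := tupleZF_injective h2.symm
    exact ⟨hp', hF⟩
  · rintro ⟨hp, hF⟩
    exact ⟨p, hp, σ, hσ, hF, rfl⟩

/-- Semantic forcing of equality of two names. -/
def ForcesEq (F : ClassForcing M C) (p σ τ : ZFSet) : Prop :=
  ∀ G : Set ZFSet, IsGeneric F G → p ∈ G → val G σ = val G τ

/-- Semantic forcing of membership between two names. -/
def ForcesMem (F : ClassForcing M C) (p σ τ : ZFSet) : Prop :=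
  ∀ G : Set ZFSet, IsGeneric F G → p ∈ G → val G σ ∈ val G τ

theorem forces_mem_iff {F : ClassForcing M C} {κ n : ℕ} (i j : Fin n)
    (Γ : Fin κ → Set ZFSet) (p : ZFSet) (σ : Fin n → ZFSet) :
    Forces F (CFml.mem i j) Γ p σ ↔ ForcesMem F p (σ i) (σ j) := by
  unfold Forces ForcesMem
  refine forall_congr' fun G => forall_congr' fun _ => forall_congr' fun _ => ?_
  rw [satC_mem]

theorem forces_eq_iff {F : ClassForcing M C} {κ n : ℕ} (i j : Fin n)
    (Γ : Fin κ → Set ZFSet) (p : ZFSet) (σ : Fin n → ZFSet) :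
    Forces F (CFml.eq i j) Γ p σ ↔ ForcesEq F p (σ i) (σ j) := by
  unfold Forces ForcesEq
  refine forall_congr' fun G => forall_congr' fun _ => forall_congr' fun _ => ?_
  rw [satC_eq]

/-- The atomic membership-forcing class. -/
def AMem (F : ClassForcing M C) : Set ZFSet :=
  defCls F (CFml.mem 0 1 : Fml 2) (fun i => i.elim0)

/-- The atomic equality-forcing class. -/
def AEq (F : ClassForcing M C) : Set ZFSet :=
  defCls F (CFml.eq 0 1 : Fml 2) (fun i => i.elim0)

theorem vec2_names {F : ClassForcing M C} {a b : ZFSet} (ha : NameM M F.P a)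
    (hb : NameM M F.P b) : ∀ i : Fin 2, (![a, b] : Fin 2 → ZFSet) i ∈ M ∧
      IsName F.P ((![a, b] : Fin 2 → ZFSet) i) := by
  intro i
  fin_cases i
  · exact ha
  · exact hb

theorem mem_AMem {F : ClassForcing M C} {p a b : ZFSet} (ha : NameM M F.P a)
    (hb : NameM M F.P b) :
    ZFSet.pair p (tuple2 a b) ∈ AMem F ↔ p ∈ F.P ∧ ForcesMem F p a b := by
  rw [← tupleZF_two, AMem, mem_defCls (vec2_names ha hb), forces_mem_iff]
  exact Iff.rfl

theorem mem_AEq {F : ClassForcing M C} {p a b : ZFSet} (ha : NameM M F.P a)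
    (hb : NameM M F.P b) :
    ZFSet.pair p (tuple2 a b) ∈ AEq F ↔ p ∈ F.P ∧ ForcesEq F p a b := by
  rw [← tupleZF_two, AEq, mem_defCls (vec2_names ha hb), forces_eq_iff]
  exact Iff.rfl

/-- Decoding a membership of the atomic forcing classes without knowing namehood. -/
theorem of_mem_AMem {F : ClassForcing M C} {p a b : ZFSet}
    (h : ZFSet.pair p (tuple2 a b) ∈ AMem F) :
    p ∈ F.P ∧ NameM M F.P a ∧ NameM M F.P b ∧ ForcesMem F p a b := by
  obtain ⟨p', hp', σ', hσ', hF, hx⟩ := h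
  obtain ⟨rfl, h2⟩ := ZFSet.pair_injective hx.symm
  rw [← tupleZF_two] at h2
  obtain rfl := tupleZF_injective h2.symm
  exact ⟨hp', hσ' 0, hσ' 1, (forces_mem_iff 0 1 _ _ _).1 hF⟩

theorem of_mem_AEq {F : ClassForcing M C} {p a b : ZFSet}
    (h : ZFSet.pair p (tuple2 a b) ∈ AEq F) :
    p ∈ F.P ∧ NameM M F.P a ∧ NameM M F.P b ∧ ForcesEq F p a b := by
  obtain ⟨p', hp', σ', hσ', hF, hx⟩ := h
  obtain ⟨rfl, h2⟩ := ZFSet.pair_injective hx.symm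
  rw [← tupleZF_two] at h2
  obtain rfl := tupleZF_injective h2.symm
  exact ⟨hp', hσ' 0, hσ' 1, (forces_eq_iff 0 1 _ _ _).1 hF⟩

theorem one_mem_generic {F : ClassForcing M C} {G : Set ZFSet} (hG : IsGeneric F G) :
    F.one ∈ G := by
  obtain ⟨p, hpD, hpG⟩ := hG.meets F.P F.P_mem (le_refl _)
    (fun q hq => ⟨q, hq, hq, F.le_refl q hq⟩)
  exact hG.upward p hpG F.one F.one_mem (F.le_one p hpD)

end ForcingSide


section Phase2

variable {M : ZFSet} {C : Set (Set ZFSet)}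

theorem nameSem_AMem (hMC : GBminus M C) (F : ClassForcing M C) (σ : ZFSet) :
    NameSem M (AMem F) F.one σ ↔ NameM M F.P σ := by
  constructor
  · rintro ⟨τ', _, hmem⟩
    exact (of_mem_AMem hmem).2.1
  · rintro ⟨hσM, hσn⟩
    have honeM : F.one ∈ M := F.P_subM _ F.one_mem
    have hpm : ZFSet.pair σ F.one ∈ M :=
      PairClosed.pair_mem hMC.pairing hσM honeM
    have hsM : ({ZFSet.pair σ F.one} : ZFSet) ∈ M := by
      simpa using hMC.pairing _ hpm _ hpm
    have hsn : IsName F.P ({ZFSet.pair σ F.one} : ZFSet) := by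
      refine IsName.intro _ (fun x hx => ?_) (fun τ p hτp => ?_)
      · exact ⟨σ, F.one, F.one_mem, by simpa using hx⟩
      · have := ZFSet.mem_singleton.1 hτp
        obtain ⟨rfl, rfl⟩ := ZFSet.pair_injective this
        exact hσn
    refine ⟨_, hsM, (mem_AMem ⟨hσM, hσn⟩ ⟨hsM, hsn⟩).2 ⟨F.one_mem, ?_⟩⟩
    intro G hG hone
    exact val_mem_val hone (ZFSet.mem_singleton.2 rfl)

theorem nameSem_AEq (F : ClassForcing M C) (σ : ZFSet) :
    NameSem M (AEq F) F.one σ ↔ NameM M F.P σ := by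
  constructor
  · rintro ⟨τ', _, hmem⟩
    exact (of_mem_AEq hmem).2.1
  · intro hσ
    exact ⟨σ, hσ.1, (mem_AEq hσ hσ).2 ⟨F.one_mem, fun _ _ _ => rfl⟩⟩

/-- Bridge: any class given by a `DF`-formula with class parameters in `C` and set
parameters in `M` is in `C`. -/
theorem classC (hMC : GBminus M C) {κ m : ℕ} (φ : DF M κ (m+1)) (Γ : Fin κ → Set ZFSet)
    (hΓ : ∀ i, Γ i ∈ C) (a : Fin m → ZFSet) (ha : ∀ i, a i ∈ M) :
    {y : ZFSet | y ∈ M ∧ φ.sem Γ (Fin.snoc a y)} ∈ C := by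
  have h2 := hMC.comprehension κ m φ.fml Γ hΓ a ha
  have he : {y : ZFSet | y ∈ M ∧ SatC M.toSet Γ φ.fml (Fin.snoc a y)} =
      {y : ZFSet | y ∈ M ∧ φ.sem Γ (Fin.snoc a y)} :=
    Set.ext fun y => and_congr_right fun hy =>
      φ.h Γ (fun i => hMC.classes_sub _ (hΓ i)) _ (snoc_mem_M ha hy)
  rwa [he] at h2

/-- Compatibility, in "class language". -/
def CompatC (M : ZFSet) {C : Set (Set ZFSet)} (F : ClassForcing M C) (r w : ZFSet) : Prop :=
  ∃ u ∈ M, u ∈ F.P ∧ (ZFSet.pair u r ∈ LeCls F ∧ ZFSet.pair u w ∈ LeCls F)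

theorem compatC_of_mem_generic {F : ClassForcing M C} {G : Set ZFSet}
    (hG : IsGeneric F G) {r w : ZFSet} (hr : r ∈ G) (hw : w ∈ G) : CompatC M F r w := by
  obtain ⟨u, huG, huP, h1, h2⟩ := hG.descend₂ hr hw
  exact ⟨u, F.P_subM _ huP, huP,
    pair_mem_LeCls.2 ⟨huP, hG.sub hr, h1⟩, pair_mem_LeCls.2 ⟨huP, hG.sub hw, h2⟩⟩

/-- The "A-condition": nothing below `p` can distinguish `σ` and `τ`,
with `W τ' ρ r` reading "`r` forces `ρ` to lie in `τ'`". -/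
def ACond (M : ZFSet) {C : Set (Set ZFSet)} (F : ClassForcing M C)
    (W : ZFSet → ZFSet → ZFSet → Prop) (σ τ p : ZFSet) : Prop :=
  ∀ q ∈ M, ZFSet.pair q p ∈ LeCls F →
    (∀ ρ ∈ M, ∀ s ∈ M, (ZFSet.pair ρ s ∈ σ ∧ ZFSet.pair q s ∈ LeCls F) →
      ∃ r ∈ M, ZFSet.pair r q ∈ LeCls F ∧ W τ ρ r) ∧
    (∀ ρ ∈ M, ∀ s ∈ M, (ZFSet.pair ρ s ∈ τ ∧ ZFSet.pair q s ∈ LeCls F) →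
      ∃ r ∈ M, ZFSet.pair r q ∈ LeCls F ∧ W σ ρ r)

/-- The "B-condition": some pair below `p` witnesses that `σ` and `τ` must differ. -/
def BCond (M : ZFSet) {C : Set (Set ZFSet)} (F : ClassForcing M C)
    (W : ZFSet → ZFSet → ZFSet → Prop) (σ τ p : ZFSet) : Prop :=
  (∃ ρ ∈ M, ∃ s ∈ M, (ZFSet.pair ρ s ∈ σ ∧ ZFSet.pair p s ∈ LeCls F) ∧
    ∀ q ∈ M, ZFSet.pair q p ∈ LeCls F → ¬ W τ ρ q) ∨
  (∃ ρ ∈ M, ∃ s ∈ M, (ZFSet.pair ρ s ∈ τ ∧ ZFSet.pair p s ∈ LeCls F) ∧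
    ∀ q ∈ M, ZFSet.pair q p ∈ LeCls F → ¬ W σ ρ q)

/-- Density of (A-or-B). -/
theorem AB_dense {F : ClassForcing M C}
    (W : ZFSet → ZFSet → ZFSet → Prop) (σ τ : ZFSet) {p : ZFSet} (hp : p ∈ F.P) :
    ∃ p', p' ∈ M ∧ p' ∈ F.P ∧ F.le p' p ∧
      (ACond M F W σ τ p' ∨ BCond M F W σ τ p') := by
  classical
  by_cases hB : ∃ q ∈ M, ZFSet.pair q p ∈ LeCls F ∧ BCond M F W σ τ q
  · obtain ⟨q, hqM, hqle, hqB⟩ := hB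
    obtain ⟨hq1, -, hq3⟩ := pair_mem_LeCls.1 hqle
    exact ⟨q, hqM, hq1, hq3, Or.inr hqB⟩
  · push_neg at hB
    refine ⟨p, F.P_subM p hp, hp, F.le_refl p hp, Or.inl ?_⟩
    intro q hqM hqle
    constructor
    · rintro ρ hρM s hsM ⟨hρs, hqs⟩
      by_contra hno
      push_neg at hno
      refine hB q hqM hqle (Or.inl ⟨ρ, hρM, s, hsM, ⟨hρs, hqs⟩, ?_⟩)
      intro r hrM hrq hW
      exact hno r hrM hrq hW
    · rintro ρ hρM s hsM ⟨hρs, hqs⟩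
      by_contra hno
      push_neg at hno
      refine hB q hqM hqle (Or.inr ⟨ρ, hρM, s, hsM, ⟨hρs, hqs⟩, ?_⟩)
      intro r hrM hrq hW
      exact hno r hrM hrq hW

theorem ForcesEq.mono {F : ClassForcing M C} {p q σ τ : ZFSet} (h : ForcesEq F p σ τ)
    (hp : p ∈ F.P) (hq : q ∈ F.P) (hle : F.le q p) : ForcesEq F q σ τ :=
  fun G hG hqG => h G hG (hG.upward q hqG p hp hle)

theorem ForcesMem.mono {F : ClassForcing M C} {p q σ τ : ZFSet} (h : ForcesMem F p σ τ)
    (hp : p ∈ F.P) (hq : q ∈ F.P) (hle : F.le q p) : ForcesMem F q σ τ :=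
  fun G hG hqG => h G hG (hG.upward q hqG p hp hle)

/-- Half of "A implies forcing equality": the A-condition for the `σ`-side yields
`val σ ⊆ val τ` in every extension. -/
theorem A_half (hMC : GBminus M C) {F : ClassForcing M C}
    {W : ZFSet → ZFSet → ZFSet → Prop} {σ τ p : ZFSet}
    (hσ : NameM M F.P σ) (hτM : τ ∈ M)
    (hWc : ∀ ρ w, ρ ∈ M → w ∈ M →
      {r : ZFSet | r ∈ M ∧ (r ∈ F.P ∧ (W τ ρ r ∨ ¬ CompatC M F r w))} ∈ C)
    (hWs : ∀ ρ r (G : Set ZFSet), IsGeneric F G → r ∈ G → W τ ρ r →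
      val G ρ ∈ val G τ)
    (hA : ∀ q ∈ M, ZFSet.pair q p ∈ LeCls F →
      ∀ ρ ∈ M, ∀ s ∈ M, (ZFSet.pair ρ s ∈ σ ∧ ZFSet.pair q s ∈ LeCls F) →
        ∃ r ∈ M, ZFSet.pair r q ∈ LeCls F ∧ W τ ρ r)
    (hp : p ∈ F.P) :
    ∀ G : Set ZFSet, IsGeneric F G → p ∈ G → ∀ x ∈ val G σ, x ∈ val G τ := by
  intro G hG hpG x hx
  obtain ⟨ρ, s, hsG, hpair, rfl⟩ := mem_val.1 hx
  obtain ⟨hρM, hsM⟩ := mem_of_pair_mem_of_mem hMC.transitive hpair hσ.1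
  have hsP : s ∈ F.P := (hσ.2.of_pair_mem hpair).2
  obtain ⟨w, hwG, hwP, hwp, hws⟩ := hG.descend₂ hpG hsG
  have hwM : w ∈ M := F.P_subM w hwP
  have hD := hWc ρ w hρM hwM
  have hdense : DenseIn F.P F.le
      {r : ZFSet | r ∈ M ∧ (r ∈ F.P ∧ (W τ ρ r ∨ ¬ CompatC M F r w))} := by
    intro t htP
    by_cases hc : CompatC M F t w
    · obtain ⟨u, huM, huP, hut, huw⟩ := hc
      have hupq : leP F u w := pair_mem_LeCls.1 huw
      have hup : ZFSet.pair u p ∈ LeCls F :=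
        pair_mem_LeCls.2 (leP_trans hupq ⟨hwP, hp, hwp⟩)
      have hus : ZFSet.pair u s ∈ LeCls F :=
        pair_mem_LeCls.2 (leP_trans hupq ⟨hwP, hsP, hws⟩)
      obtain ⟨r, hrM, hrq, hW⟩ := hA u huM hup ρ hρM s hsM ⟨hpair, hus⟩
      have hrleP := pair_mem_LeCls.1 hrq
      exact ⟨r, ⟨hrM, hrleP.1, Or.inl hW⟩, hrleP.1,
        F.le_trans r hrleP.1 u huP t htP hrleP.2.2 (pair_mem_LeCls.1 hut).2.2⟩
    · exact ⟨t, ⟨F.P_subM t htP, htP, Or.inr hc⟩, htP, F.le_refl t htP⟩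
  obtain ⟨r, hrD, hrG⟩ := hG.meets _ hD (fun r hr => hr.2.1) hdense
  rcases hrD.2.2 with hW | hnc
  · exact hWs ρ r G hG hrG hW
  · exact absurd (compatC_of_mem_generic hG hrG hwG) hnc

/-- The A-condition implies that `p` forces `σ = τ`. -/
theorem ACond_forcesEq (hMC : GBminus M C) {F : ClassForcing M C}
    {W : ZFSet → ZFSet → ZFSet → Prop} {σ τ p : ZFSet}
    (hσ : NameM M F.P σ) (hτ : NameM M F.P τ)
    (hWc : ∀ τ' ρ w, τ' ∈ M → ρ ∈ M → w ∈ M →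
      {r : ZFSet | r ∈ M ∧ (r ∈ F.P ∧ (W τ' ρ r ∨ ¬ CompatC M F r w))} ∈ C)
    (hWsτ : ∀ ρ r (G : Set ZFSet), IsGeneric F G → r ∈ G → W τ ρ r →
      val G ρ ∈ val G τ)
    (hWsσ : ∀ ρ r (G : Set ZFSet), IsGeneric F G → r ∈ G → W σ ρ r →
      val G ρ ∈ val G σ)
    (hp : p ∈ F.P) (hA : ACond M F W σ τ p) : ForcesEq F p σ τ := by
  intro G hG hpG
  apply ZFSet.ext
  intro x
  constructor
  · exact fun hx => A_half hMC hσ hτ.1 (fun ρ w h1 h2 => hWc τ ρ w hτ.1 h1 h2) hWsτ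
      (fun q hq hqp => (hA q hq hqp).1) hp G hG hpG x hx
  · exact fun hx => A_half hMC hτ hσ.1 (fun ρ w h1 h2 => hWc σ ρ w hσ.1 h1 h2) hWsσ
      (fun q hq hqp => (hA q hq hqp).2) hp G hG hpG x hx

section Classes

variable {F : ClassForcing M C}

/-- Class-parameter vector used everywhere: `P`, `≤`, and two auxiliary classes. -/
def ΓV (F : ClassForcing M C) (X Y : Set ZFSet) : Fin 4 → Set ZFSet :=
  ![F.P, LeCls F, X, Y]

theorem ΓV_mem (F : ClassForcing M C) {X Y : Set ZFSet} (hX : X ∈ C) (hY : Y ∈ C) :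
    ∀ i, ΓV F X Y i ∈ C := by
  intro i
  fin_cases i
  · exact F.P_mem
  · exact LeCls_mem F
  · exact hX
  · exact hY

/-- The membership-case inner condition. -/
def WM (F : ClassForcing M C) (X : Set ZFSet) (t a r : ZFSet) : Prop :=
  ZFSet.pair r (tuple2 a t) ∈ X

/-- The equality-case inner condition. -/
def WE (M : ZFSet) {C : Set (Set ZFSet)} (F : ClassForcing M C) (X : Set ZFSet)
    (t a r : ZFSet) : Prop :=
  ∃ π ∈ M, ∃ t' ∈ M, (ZFSet.pair π t' ∈ t ∧
    (ZFSet.pair r t' ∈ LeCls F ∧ ZFSet.pair r (tuple2 a π) ∈ X))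

/-- The `W`-formula for the membership case, on variables `(t, a, r)`. -/
def dfWM (hMt : M.IsTransitive) (hMp : PairClosed M) (hM0 : (∅ : ZFSet) ∈ M) :
    DF M 4 3 :=
  DF.rename ![2, 1, 0] (dfForcesPair hMt hMp hM0 2)

/-- The `W`-formula for the equality case, on variables `(t, a, r)`. -/
def dfWE (hMt : M.IsTransitive) (hMp : PairClosed M) (hM0 : (∅ : ZFSet) ∈ M) :
    DF M 4 3 :=
  DF.ex (DF.ex ((DF.rename ![0, 3, 4] (dfPairMemVar hMt hMp)).and
    ((DF.rename ![2, 4] (dfPairMemCls hMt hMp 1)).and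
     (DF.rename ![2, 1, 3] (dfForcesPair hMt hMp hM0 2)))))

/-- The `Dw` class for the membership case. -/
theorem DwM_class (hMC : GBminus M C) (hX : AMem F ∈ C) {τ' ρ w : ZFSet} (hτ' : τ' ∈ M) (hρ : ρ ∈ M)
    (hw : w ∈ M) :
    {r : ZFSet | r ∈ M ∧ (r ∈ F.P ∧ (WM F (AMem F) τ' ρ r ∨ ¬ CompatC M F r w))} ∈ C := by
  have hMt := hMC.transitive
  have hMp : PairClosed M := hMC.pairing
  have hM0 := hMC.empty_mem
  have ha : ∀ i, (![τ', ρ, w] : Fin 3 → ZFSet) i ∈ M := by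
    intro i; fin_cases i <;> assumption
  exact classC hMC ((DF.clsv 0 3).and ((DF.rename ![3, 1, 0] (dfForcesPair hMt hMp hM0 2)).or
      (DF.ex ((DF.clsv 0 4).and ((DF.rename ![4, 3] (dfPairMemCls hMt hMp 1)).and
        (DF.rename ![4, 2] (dfPairMemCls hMt hMp 1))))).not))
    (ΓV F (AMem F) (AMem F)) (ΓV_mem F hX hX) ![τ', ρ, w] ha

/-- The `Dw` class for the equality case. -/
theorem DwE_class (hMC : GBminus M C) (hX : AEq F ∈ C) {τ' ρ w : ZFSet} (hτ' : τ' ∈ M) (hρ : ρ ∈ M)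
    (hw : w ∈ M) :
    {r : ZFSet | r ∈ M ∧ (r ∈ F.P ∧ (WE M F (AEq F) τ' ρ r ∨ ¬ CompatC M F r w))} ∈ C := by
  have hMt := hMC.transitive
  have hMp : PairClosed M := hMC.pairing
  have hM0 := hMC.empty_mem
  have ha : ∀ i, (![τ', ρ, w] : Fin 3 → ZFSet) i ∈ M := by
    intro i; fin_cases i <;> assumption
  exact classC hMC ((DF.clsv 0 3).and ((DF.rename ![0, 1, 3] (dfWE hMt hMp hM0)).or
      (DF.ex ((DF.clsv 0 4).and ((DF.rename ![4, 3] (dfPairMemCls hMt hMp 1)).and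
        (DF.rename ![4, 2] (dfPairMemCls hMt hMp 1))))).not))
    (ΓV F (AEq F) (AEq F)) (ΓV_mem F hX hX) ![τ', ρ, w] ha

/-- The A-condition formula on variables `(σ, τ, p)`, given the `W`-formula. -/
def dfACond (hMt : M.IsTransitive) (hMp : PairClosed M) (hM0 : (∅ : ZFSet) ∈ M)
    (dfW : DF M 4 3) : DF M 4 3 :=
  let le : ∀ {N : ℕ}, Fin N → Fin N → DF M 4 N :=
    fun i j => DF.rename ![i, j] (dfPairMemCls hMt hMp 1)
  let pm : ∀ {N : ℕ}, Fin N → Fin N → Fin N → DF M 4 N :=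
    fun k i j => DF.rename ![k, i, j] (dfPairMemVar hMt hMp)
  let half1 : DF M 4 4 := DF.all (DF.all (DF.imp ((pm 0 4 5).and (le 3 5))
    (DF.ex (DF.and (le 6 3) (DF.rename ![1, 4, 6] dfW)))))
  let half2 : DF M 4 4 := DF.all (DF.all (DF.imp ((pm 1 4 5).and (le 3 5))
    (DF.ex (DF.and (le 6 3) (DF.rename ![0, 4, 6] dfW)))))
  DF.all (DF.imp (le 3 2) (DF.and half1 half2))

/-- The main formula: `p ∈ P` and (A-condition or B-condition), on variables
`(σ, τ, p)`, given the `W`-formula. -/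
def dfMain (hMt : M.IsTransitive) (hMp : PairClosed M) (hM0 : (∅ : ZFSet) ∈ M)
    (dfW : DF M 4 3) : DF M 4 3 :=
  let le : ∀ {N : ℕ}, Fin N → Fin N → DF M 4 N :=
    fun i j => DF.rename ![i, j] (dfPairMemCls hMt hMp 1)
  let pm : ∀ {N : ℕ}, Fin N → Fin N → Fin N → DF M 4 N :=
    fun k i j => DF.rename ![k, i, j] (dfPairMemVar hMt hMp)
  let dfB1 : DF M 4 3 := DF.ex (DF.ex (DF.and ((pm 0 3 4).and (le 2 4))
    (DF.all (DF.imp (le 5 2) (DF.not (DF.rename ![1, 3, 5] dfW))))))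
  let dfB2 : DF M 4 3 := DF.ex (DF.ex (DF.and ((pm 1 3 4).and (le 2 4))
    (DF.all (DF.imp (le 5 2) (DF.not (DF.rename ![0, 3, 5] dfW))))))
  (DF.clsv 0 2).and (DF.or (dfACond hMt hMp hM0 dfW) (DF.or dfB1 dfB2))

theorem DMainM_class (hMC : GBminus M C) (hX : AMem F ∈ C) {σ τ : ZFSet}
    (hσ : σ ∈ M) (hτ : τ ∈ M) :
    {p : ZFSet | p ∈ M ∧ (p ∈ F.P ∧ (ACond M F (WM F (AMem F)) σ τ p ∨
      BCond M F (WM F (AMem F)) σ τ p))} ∈ C := by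
  have hMt := hMC.transitive
  have hMp : PairClosed M := hMC.pairing
  have hM0 := hMC.empty_mem
  have ha : ∀ i, (![σ, τ] : Fin 2 → ZFSet) i ∈ M := by
    intro i; fin_cases i <;> assumption
  exact classC hMC (dfMain hMt hMp hM0 (dfWM hMt hMp hM0))
    (ΓV F (AMem F) (AMem F)) (ΓV_mem F hX hX) ![σ, τ] ha

theorem DMainE_class (hMC : GBminus M C) (hX : AEq F ∈ C) {σ τ : ZFSet}
    (hσ : σ ∈ M) (hτ : τ ∈ M) :
    {p : ZFSet | p ∈ M ∧ (p ∈ F.P ∧ (ACond M F (WE M F (AEq F)) σ τ p ∨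
      BCond M F (WE M F (AEq F)) σ τ p))} ∈ C := by
  have hMt := hMC.transitive
  have hMp : PairClosed M := hMC.pairing
  have hM0 := hMC.empty_mem
  have ha : ∀ i, (![σ, τ] : Fin 2 → ZFSet) i ∈ M := by
    intro i; fin_cases i <;> assumption
  exact classC hMC (dfMain hMt hMp hM0 (dfWE hMt hMp hM0))
    (ΓV F (AEq F) (AEq F)) (ΓV_mem F hX hX) ![σ, τ] ha

theorem WM_sound {τ' ρ r : ZFSet} {G : Set ZFSet} (hG : IsGeneric F G) (hrG : r ∈ G)
    (hW : WM F (AMem F) τ' ρ r) : val G ρ ∈ val G τ' :=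
  (of_mem_AMem hW).2.2.2 G hG hrG

theorem WE_sound {τ' ρ r : ZFSet} (hτ' : IsName F.P τ') {G : Set ZFSet}
    (hG : IsGeneric F G) (hrG : r ∈ G) (hW : WE M F (AEq F) τ' ρ r) :
    val G ρ ∈ val G τ' := by
  obtain ⟨π, _, t', _, hπt', hrt', hX⟩ := hW
  obtain ⟨hrP, -, -, hFeq⟩ := of_mem_AEq hX
  have ht'P : t' ∈ F.P := (hτ'.of_pair_mem hπt').2
  have ht'G : t' ∈ G := hG.upward r hrG t' ht'P (pair_mem_LeCls.1 hrt').2.2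
  rw [hFeq G hG hrG]
  exact val_mem_val ht'G hπt'

end Classes

theorem mm_lt {a b a' b' : Ordinal} (h1 : a' ≤ a) (h2 : b' ≤ b) (h : a' < a ∨ b' < b) :
    Prod.Lex (· < ·) (· < ·) (max a' b', min a' b') (max a b, min a b) := by
  rw [Prod.lex_def]
  rcases lt_or_eq_of_le (max_le_max h1 h2) with hm | hm
  · exact Or.inl hm
  · refine Or.inr ⟨hm, ?_⟩
    simp only [max_def, min_def] at hm ⊢
    split_ifs at hm ⊢ <;> rcases h with h | h <;> order

/-- **Truth lemma for atomic formulas**, by induction on name rank. -/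
theorem truth_atomic (hMC : GBminus M C) (F : ClassForcing M C)
    (h : AMem F ∈ C ∨ AEq F ∈ C) (σ τ : ZFSet)
    (hσ : NameM M F.P σ) (hτ : NameM M F.P τ) :
    (∀ G : Set ZFSet, IsGeneric F G → val G σ = val G τ → ∃ p ∈ G, ForcesEq F p σ τ) ∧
    (∀ G : Set ZFSet, IsGeneric F G → val G σ ∈ val G τ → ∃ p ∈ G, ForcesMem F p σ τ) := by
  constructor
  · -- equality part
    intro G hG heq
    rcases h with hX | hX
    · -- we have the membership class
      have hD := DMainM_class (F := F) hMC hX hσ.1 hτ.1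
      have hdense : DenseIn F.P F.le
          {p : ZFSet | p ∈ M ∧ (p ∈ F.P ∧ (ACond M F (WM F (AMem F)) σ τ p ∨
            BCond M F (WM F (AMem F)) σ τ p))} := by
        intro p hp
        obtain ⟨p', h1, h2, h3, h4⟩ := AB_dense (WM F (AMem F)) σ τ hp
        exact ⟨p', ⟨h1, h2, h4⟩, h2, h3⟩
      obtain ⟨p0, hp0D, hp0G⟩ := hG.meets _ hD (fun p hp => hp.2.1) hdense
      obtain ⟨hp0M, hp0P, hAB⟩ := hp0D
      rcases hAB with hA | hB
      · refine ⟨p0, hp0G, ACond_forcesEq hMC hσ hτ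
          (fun τ' ρ w h1 h2 h3 => DwM_class hMC hX h1 h2 h3)
          (fun ρ r G' hG' hrG' hW => WM_sound hG' hrG' hW)
          (fun ρ r G' hG' hrG' hW => WM_sound hG' hrG' hW) hp0P hA⟩
      · exfalso
        rcases hB with ⟨ρ, hρM, s, hsM, ⟨hpair, hps⟩, hall⟩ |
          ⟨ρ, hρM, s, hsM, ⟨hpair, hps⟩, hall⟩
        · obtain ⟨hρn, hsP⟩ := hσ.2.of_pair_mem hpair
          have hsG : s ∈ G := hG.upward p0 hp0G s hsP (pair_mem_LeCls.1 hps).2.2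
          have hρτ : val G ρ ∈ val G τ := heq ▸ val_mem_val hsG hpair
          obtain ⟨q, hqG, hqF⟩ := (truth_atomic hMC F (Or.inl hX) ρ τ ⟨hρM, hρn⟩ hτ).2 G hG hρτ
          obtain ⟨r, hrG, hrP, hr1, hr2⟩ := hG.descend₂ hqG hp0G
          refine hall r (F.P_subM r hrP) (pair_mem_LeCls.2 ⟨hrP, hp0P, hr2⟩) ?_
          exact (mem_AMem ⟨hρM, hρn⟩ hτ).2 ⟨hrP, hqF.mono (hG.sub hqG) hrP hr1⟩
        · obtain ⟨hρn, hsP⟩ := hτ.2.of_pair_mem hpair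
          have hsG : s ∈ G := hG.upward p0 hp0G s hsP (pair_mem_LeCls.1 hps).2.2
          have hρσ : val G ρ ∈ val G σ := by
            rw [heq]; exact val_mem_val hsG hpair
          obtain ⟨q, hqG, hqF⟩ := (truth_atomic hMC F (Or.inl hX) ρ σ ⟨hρM, hρn⟩ hσ).2 G hG hρσ
          obtain ⟨r, hrG, hrP, hr1, hr2⟩ := hG.descend₂ hqG hp0G
          refine hall r (F.P_subM r hrP) (pair_mem_LeCls.2 ⟨hrP, hp0P, hr2⟩) ?_
          exact (mem_AMem ⟨hρM, hρn⟩ hσ).2 ⟨hrP, hqF.mono (hG.sub hqG) hrP hr1⟩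
    · -- we have the equality class
      have hD := DMainE_class (F := F) hMC hX hσ.1 hτ.1
      have hdense : DenseIn F.P F.le
          {p : ZFSet | p ∈ M ∧ (p ∈ F.P ∧ (ACond M F (WE M F (AEq F)) σ τ p ∨
            BCond M F (WE M F (AEq F)) σ τ p))} := by
        intro p hp
        obtain ⟨p', h1, h2, h3, h4⟩ := AB_dense (WE M F (AEq F)) σ τ hp
        exact ⟨p', ⟨h1, h2, h4⟩, h2, h3⟩
      obtain ⟨p0, hp0D, hp0G⟩ := hG.meets _ hD (fun p hp => hp.2.1) hdense
      obtain ⟨hp0M, hp0P, hAB⟩ := hp0D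
      rcases hAB with hA | hB
      · refine ⟨p0, hp0G, ACond_forcesEq hMC hσ hτ
          (fun τ' ρ w h1 h2 h3 => DwE_class hMC hX h1 h2 h3)
          (fun ρ r G' hG' hrG' hW => WE_sound hτ.2 hG' hrG' hW)
          (fun ρ r G' hG' hrG' hW => WE_sound hσ.2 hG' hrG' hW) hp0P hA⟩
      · exfalso
        rcases hB with ⟨ρ, hρM, s, hsM, ⟨hpair, hps⟩, hall⟩ |
          ⟨ρ, hρM, s, hsM, ⟨hpair, hps⟩, hall⟩
        · obtain ⟨hρn, hsP⟩ := hσ.2.of_pair_mem hpair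
          have hsG : s ∈ G := hG.upward p0 hp0G s hsP (pair_mem_LeCls.1 hps).2.2
          have hρτ : val G ρ ∈ val G τ := heq ▸ val_mem_val hsG hpair
          obtain ⟨π, t', ht'G, hπt', hvρπ⟩ := mem_val.1 hρτ
          obtain ⟨hπn, ht'P⟩ := hτ.2.of_pair_mem hπt'
          obtain ⟨hπM, ht'M⟩ := mem_of_pair_mem_of_mem hMC.transitive hπt' hτ.1
          obtain ⟨q, hqG, hqF⟩ :=
            (truth_atomic hMC F (Or.inr hX) ρ π ⟨hρM, hρn⟩ ⟨hπM, hπn⟩).1 G hG hvρπ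
          obtain ⟨r, hrG, hrP, hr1, hr2, hr3⟩ := hG.descend₃ hp0G ht'G hqG
          refine hall r (F.P_subM r hrP) (pair_mem_LeCls.2 ⟨hrP, hp0P, hr1⟩)
            ⟨π, hπM, t', ht'M, hπt', pair_mem_LeCls.2 ⟨hrP, ht'P, hr2⟩, ?_⟩
          exact ((mem_AEq ⟨hρM, hρn⟩ ⟨hπM, hπn⟩).2
            ⟨hrP, hqF.mono (hG.sub hqG) hrP hr3⟩)
        · obtain ⟨hρn, hsP⟩ := hτ.2.of_pair_mem hpair
          have hsG : s ∈ G := hG.upward p0 hp0G s hsP (pair_mem_LeCls.1 hps).2.2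
          have hρσ : val G ρ ∈ val G σ := by
            rw [heq]; exact val_mem_val hsG hpair
          obtain ⟨π, t', ht'G, hπt', hvρπ⟩ := mem_val.1 hρσ
          obtain ⟨hπn, ht'P⟩ := hσ.2.of_pair_mem hπt'
          obtain ⟨hπM, ht'M⟩ := mem_of_pair_mem_of_mem hMC.transitive hπt' hσ.1
          obtain ⟨q, hqG, hqF⟩ :=
            (truth_atomic hMC F (Or.inr hX) ρ π ⟨hρM, hρn⟩ ⟨hπM, hπn⟩).1 G hG hvρπ
          obtain ⟨r, hrG, hrP, hr1, hr2, hr3⟩ := hG.descend₃ hp0G ht'G hqG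
          refine hall r (F.P_subM r hrP) (pair_mem_LeCls.2 ⟨hrP, hp0P, hr1⟩)
            ⟨π, hπM, t', ht'M, hπt', pair_mem_LeCls.2 ⟨hrP, ht'P, hr2⟩, ?_⟩
          exact ((mem_AEq ⟨hρM, hρn⟩ ⟨hπM, hπn⟩).2
            ⟨hrP, hqF.mono (hG.sub hqG) hrP hr3⟩)
  · -- membership part
    intro G hG hmem
    obtain ⟨ρ, s, hsG, hpairm, hval⟩ := mem_val.1 hmem
    obtain ⟨hρn, hsP⟩ := hτ.2.of_pair_mem hpairm
    obtain ⟨hρM, hsM⟩ := mem_of_pair_mem_of_mem hMC.transitive hpairm hτ.1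
    obtain ⟨q, hqG, hqF⟩ := (truth_atomic hMC F h σ ρ hσ ⟨hρM, hρn⟩).1 G hG hval
    obtain ⟨r, hrG, hrP, hr1, hr2⟩ := hG.descend₂ hqG hsG
    refine ⟨r, hrG, fun G' hG' hrG' => ?_⟩
    have hqG' : q ∈ G' := hG'.upward r hrG' q (hG.sub hqG) hr1
    have hsG' : s ∈ G' := hG'.upward r hrG' s hsP hr2
    rw [hqF G' hG' hqG']
    exact val_mem_val hsG' hpairm
termination_by (max (ZFSet.rank σ) (ZFSet.rank τ), min (ZFSet.rank σ) (ZFSet.rank τ))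
decreasing_by
  all_goals simp_wf
  · exact mm_lt (le_of_lt (rank_lt_of_pair_mem hpair)) le_rfl (Or.inl (rank_lt_of_pair_mem hpair))
  · rw [max_comm (ZFSet.rank ρ), min_comm (ZFSet.rank ρ)]
    exact mm_lt le_rfl (le_of_lt (rank_lt_of_pair_mem hpair)) (Or.inr (rank_lt_of_pair_mem hpair))
  · exact mm_lt (le_of_lt (rank_lt_of_pair_mem hpair)) (le_of_lt (rank_lt_of_pair_mem hπt'))
      (Or.inl (rank_lt_of_pair_mem hpair))
  · rw [max_comm (ZFSet.rank ρ), min_comm (ZFSet.rank ρ)]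
    exact mm_lt (le_of_lt (rank_lt_of_pair_mem hπt')) (le_of_lt (rank_lt_of_pair_mem hpair))
      (Or.inl (rank_lt_of_pair_mem hπt'))
  · exact mm_lt le_rfl (le_of_lt (rank_lt_of_pair_mem hpairm)) (Or.inr (rank_lt_of_pair_mem hpairm))

/-- Forcing `σ = τ` implies the A-condition (membership-class case): half version. -/
theorem forcesHalf_M (hMC : GBminus M C) {F : ClassForcing M C} (hX : AMem F ∈ C)
    {σ τ p : ZFSet} (hσ : NameM M F.P σ) (hτ : NameM M F.P τ) (hp : p ∈ F.P)
    (hsub : ∀ G : Set ZFSet, IsGeneric F G → p ∈ G → ∀ x ∈ val G σ, x ∈ val G τ) :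
    ∀ q ∈ M, ZFSet.pair q p ∈ LeCls F →
      ∀ ρ ∈ M, ∀ s ∈ M, (ZFSet.pair ρ s ∈ σ ∧ ZFSet.pair q s ∈ LeCls F) →
        ∃ r ∈ M, ZFSet.pair r q ∈ LeCls F ∧ WM F (AMem F) τ ρ r := by
  rintro q hqM hqle ρ hρM s hsM ⟨hpair, hqs⟩
  have hq := pair_mem_LeCls.1 hqle
  obtain ⟨G, hG, hqG⟩ := exists_generic hMC F hq.1
  have hpG := hG.upward q hqG p hp hq.2.2
  have hsG := hG.upward q hqG s (pair_mem_LeCls.1 hqs).2.1 (pair_mem_LeCls.1 hqs).2.2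
  have hmem : val G ρ ∈ val G τ := hsub G hG hpG _ (val_mem_val hsG hpair)
  have hρn : IsName F.P ρ := (hσ.2.of_pair_mem hpair).1
  obtain ⟨r', hr'G, hF'⟩ :=
    (truth_atomic hMC F (Or.inl hX) ρ τ ⟨hρM, hρn⟩ hτ).2 G hG hmem
  obtain ⟨r, hrG, hrP, hr1, hr2⟩ := hG.descend₂ hqG hr'G
  exact ⟨r, F.P_subM r hrP, pair_mem_LeCls.2 ⟨hrP, hq.1, hr1⟩,
    (mem_AMem ⟨hρM, hρn⟩ hτ).2 ⟨hrP, hF'.mono (hG.sub hr'G) hrP hr2⟩⟩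

theorem forcesEq_to_ACondM (hMC : GBminus M C) {F : ClassForcing M C} (hX : AMem F ∈ C)
    {σ τ p : ZFSet} (hσ : NameM M F.P σ) (hτ : NameM M F.P τ) (hp : p ∈ F.P)
    (hF : ForcesEq F p σ τ) : ACond M F (WM F (AMem F)) σ τ p := by
  intro q hqM hqle
  constructor
  · exact forcesHalf_M hMC hX hσ hτ hp
      (fun G hG hpG x hx => (hF G hG hpG) ▸ hx) q hqM hqle
  · exact forcesHalf_M hMC hX hτ hσ hp
      (fun G hG hpG x hx => (hF G hG hpG) ▸ hx) q hqM hqle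

/-- Forcing `σ = τ` implies the A-condition (equality-class case): half version. -/
theorem forcesHalf_E (hMC : GBminus M C) {F : ClassForcing M C} (hX : AEq F ∈ C)
    {σ τ p : ZFSet} (hσ : NameM M F.P σ) (hτ : NameM M F.P τ) (hp : p ∈ F.P)
    (hsub : ∀ G : Set ZFSet, IsGeneric F G → p ∈ G → ∀ x ∈ val G σ, x ∈ val G τ) :
    ∀ q ∈ M, ZFSet.pair q p ∈ LeCls F →
      ∀ ρ ∈ M, ∀ s ∈ M, (ZFSet.pair ρ s ∈ σ ∧ ZFSet.pair q s ∈ LeCls F) →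
        ∃ r ∈ M, ZFSet.pair r q ∈ LeCls F ∧ WE M F (AEq F) τ ρ r := by
  rintro q hqM hqle ρ hρM s hsM ⟨hpair, hqs⟩
  have hq := pair_mem_LeCls.1 hqle
  obtain ⟨G, hG, hqG⟩ := exists_generic hMC F hq.1
  have hpG := hG.upward q hqG p hp hq.2.2
  have hsG := hG.upward q hqG s (pair_mem_LeCls.1 hqs).2.1 (pair_mem_LeCls.1 hqs).2.2
  have hmem : val G ρ ∈ val G τ := hsub G hG hpG _ (val_mem_val hsG hpair)
  have hρn : IsName F.P ρ := (hσ.2.of_pair_mem hpair).1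
  obtain ⟨π, t', ht'G, hπt', hvρπ⟩ := mem_val.1 hmem
  obtain ⟨hπn, ht'P⟩ := hτ.2.of_pair_mem hπt'
  obtain ⟨hπM, ht'M⟩ := mem_of_pair_mem_of_mem hMC.transitive hπt' hτ.1
  obtain ⟨q', hq'G, hF'⟩ :=
    (truth_atomic hMC F (Or.inr hX) ρ π ⟨hρM, hρn⟩ ⟨hπM, hπn⟩).1 G hG hvρπ
  obtain ⟨r, hrG, hrP, hr1, hr2, hr3⟩ := hG.descend₃ hqG ht'G hq'G
  exact ⟨r, F.P_subM r hrP, pair_mem_LeCls.2 ⟨hrP, hq.1, hr1⟩,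
    π, hπM, t', ht'M, hπt', pair_mem_LeCls.2 ⟨hrP, ht'P, hr2⟩,
    (mem_AEq ⟨hρM, hρn⟩ ⟨hπM, hπn⟩).2 ⟨hrP, hF'.mono (hG.sub hq'G) hrP hr3⟩⟩

theorem forcesEq_to_ACondE (hMC : GBminus M C) {F : ClassForcing M C} (hX : AEq F ∈ C)
    {σ τ p : ZFSet} (hσ : NameM M F.P σ) (hτ : NameM M F.P τ) (hp : p ∈ F.P)
    (hF : ForcesEq F p σ τ) : ACond M F (WE M F (AEq F)) σ τ p := by
  intro q hqM hqle
  constructor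
  · exact forcesHalf_E hMC hX hσ hτ hp
      (fun G hG hpG x hx => (hF G hG hpG) ▸ hx) q hqM hqle
  · exact forcesHalf_E hMC hX hτ hσ hp
      (fun G hG hpG x hx => (hF G hG hpG) ▸ hx) q hqM hqle

/-- The first-order description of the membership forcing relation
(equality-class case). -/
def MCond (M : ZFSet) {C : Set (Set ZFSet)} (F : ClassForcing M C) (X : Set ZFSet)
    (σ τ p : ZFSet) : Prop :=
  ∀ q ∈ M, ZFSet.pair q p ∈ LeCls F →
    ∃ r ∈ M, ZFSet.pair r q ∈ LeCls F ∧ WE M F X τ σ r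

theorem MCond_forcesMem (hMC : GBminus M C) {F : ClassForcing M C} (hX : AEq F ∈ C)
    {σ τ p : ZFSet} (hσ : NameM M F.P σ) (hτ : NameM M F.P τ) (hp : p ∈ F.P)
    (hM : MCond M F (AEq F) σ τ p) : ForcesMem F p σ τ := by
  intro G hG hpG
  have hD := DwE_class (F := F) hMC hX hτ.1 hσ.1 (F.P_subM p hp)
  have hdense : DenseIn F.P F.le
      {r : ZFSet | r ∈ M ∧ (r ∈ F.P ∧ (WE M F (AEq F) τ σ r ∨ ¬ CompatC M F r p))} := by
    intro t htP
    by_cases hc : CompatC M F t p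
    · obtain ⟨u, huM, huP, hut, hup⟩ := hc
      obtain ⟨r, hrM, hrq, hW⟩ := hM u huM hup
      have hrleP := pair_mem_LeCls.1 hrq
      exact ⟨r, ⟨hrM, hrleP.1, Or.inl hW⟩, hrleP.1,
        F.le_trans r hrleP.1 u huP t htP hrleP.2.2 (pair_mem_LeCls.1 hut).2.2⟩
    · exact ⟨t, ⟨F.P_subM t htP, htP, Or.inr hc⟩, htP, F.le_refl t htP⟩
  obtain ⟨r, hrD, hrG⟩ := hG.meets _ hD (fun r hr => hr.2.1) hdense
  rcases hrD.2.2 with hW | hnc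
  · exact WE_sound hτ.2 hG hrG hW
  · exact absurd (compatC_of_mem_generic hG hrG hpG) hnc

theorem forcesMem_to_MCond (hMC : GBminus M C) {F : ClassForcing M C} (hX : AEq F ∈ C)
    {σ τ p : ZFSet} (hσ : NameM M F.P σ) (hτ : NameM M F.P τ) (hp : p ∈ F.P)
    (hF : ForcesMem F p σ τ) : MCond M F (AEq F) σ τ p := by
  intro q hqM hqle
  have hq := pair_mem_LeCls.1 hqle
  obtain ⟨G, hG, hqG⟩ := exists_generic hMC F hq.1
  have hpG := hG.upward q hqG p hp hq.2.2
  have hmem : val G σ ∈ val G τ := hF G hG hpG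
  obtain ⟨π, t', ht'G, hπt', hvσπ⟩ := mem_val.1 hmem
  obtain ⟨hπn, ht'P⟩ := hτ.2.of_pair_mem hπt'
  obtain ⟨hπM, ht'M⟩ := mem_of_pair_mem_of_mem hMC.transitive hπt' hτ.1
  obtain ⟨q', hq'G, hF'⟩ :=
    (truth_atomic hMC F (Or.inr hX) σ π hσ ⟨hπM, hπn⟩).1 G hG hvσπ
  obtain ⟨r, hrG, hrP, hr1, hr2, hr3⟩ := hG.descend₃ hqG ht'G hq'G
  exact ⟨r, F.P_subM r hrP, pair_mem_LeCls.2 ⟨hrP, hq.1, hr1⟩,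
    π, hπM, t', ht'M, hπt', pair_mem_LeCls.2 ⟨hrP, ht'P, hr2⟩,
    (mem_AEq hσ ⟨hπM, hπn⟩).2 ⟨hrP, hF'.mono (hG.sub hq'G) hrP hr3⟩⟩

theorem AEq_mem_C_of_AMem (hMC : GBminus M C) (F : ClassForcing M C)
    (hX : AMem F ∈ C) : AEq F ∈ C := by
  have hMt := hMC.transitive
  have hMp : PairClosed M := hMC.pairing
  have hM0 := hMC.empty_mem
  -- variables: one = 0, y = 1, p = 2, σ = 3, τ = 4, t = 5
  have hS : {y : ZFSet | y ∈ M ∧ ∃ p ∈ M, ∃ σ ∈ M, ∃ τ ∈ M, ∃ t ∈ M,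
      (((y = ZFSet.pair p t ∧ t = tuple2 σ τ) ∧ p ∈ F.P) ∧
        (NameSem M (AMem F) F.one σ ∧ NameSem M (AMem F) F.one τ)) ∧
        ACond M F (WM F (AMem F)) σ τ p} ∈ C := by
    exact classC hMC (DF.ex (DF.ex (DF.ex (DF.ex (DF.and
        (DF.and (DF.and (DF.and (DF.rename ![1, 2, 5] (dfKPair hMt hMp))
          (DF.rename ![5, 3, 4] (dfTuple2 hMt hMp hM0))) (DF.clsv 0 2))
          (DF.and (DF.rename ![3, 0] (dfName hMt hMp hM0 2))
            (DF.rename ![4, 0] (dfName hMt hMp hM0 2))))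
        (DF.rename ![3, 4, 2] (dfACond hMt hMp hM0 (dfWM hMt hMp hM0))))))))
      (ΓV F (AMem F) (AMem F)) (ΓV_mem F hX hX) ![F.one] (by
        intro i; fin_cases i; exact F.P_subM _ F.one_mem)
  have he : AEq F = {y : ZFSet | y ∈ M ∧ ∃ p ∈ M, ∃ σ ∈ M, ∃ τ ∈ M, ∃ t ∈ M,
      (((y = ZFSet.pair p t ∧ t = tuple2 σ τ) ∧ p ∈ F.P) ∧
        (NameSem M (AMem F) F.one σ ∧ NameSem M (AMem F) F.one τ)) ∧
        ACond M F (WM F (AMem F)) σ τ p} := by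
    apply Set.ext
    intro x
    constructor
    · rintro ⟨p, hp, σv, hσv, hFeq, rfl⟩
      have hvec : σv = ![σv 0, σv 1] := by
        funext i; fin_cases i <;> rfl
      have htM : tupleZF σv ∈ M := tupleZF_mem hMp hM0 _ (fun i => (hσv i).1)
      have hpM : p ∈ M := F.P_subM p hp
      refine ⟨hMp.pair_mem hpM htM, p, hpM, σv 0, (hσv 0).1, σv 1, (hσv 1).1,
        tupleZF σv, htM, ⟨⟨⟨rfl, ?_⟩, hp⟩,
          (nameSem_AMem hMC F _).2 (hσv 0), (nameSem_AMem hMC F _).2 (hσv 1)⟩, ?_⟩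
      · conv_lhs => rw [hvec]
        rw [tupleZF_two]
      · exact forcesEq_to_ACondM hMC hX (hσv 0) (hσv 1) hp
          ((forces_eq_iff 0 1 _ _ _).1 hFeq)
    · rintro ⟨hyM, p, hpM, σ, hσM, τ, hτM, t, htM, ⟨⟨⟨hy, ht⟩, hpP⟩, hnσ, hnτ⟩, hA⟩
      have hσn := (nameSem_AMem hMC F σ).1 hnσ
      have hτn := (nameSem_AMem hMC F τ).1 hnτ
      have hFeq : ForcesEq F p σ τ := ACond_forcesEq hMC hσn hτn
        (fun τ' ρ w h1 h2 h3 => DwM_class hMC hX h1 h2 h3)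
        (fun ρ r G' hG' hrG' hW => WM_sound hG' hrG' hW)
        (fun ρ r G' hG' hrG' hW => WM_sound hG' hrG' hW) hpP hA
      refine ⟨p, hpP, ![σ, τ], vec2_names hσn hτn, (forces_eq_iff 0 1 _ _ _).2 hFeq, ?_⟩
      rw [tupleZF_two, ← ht]
      exact hy
  rwa [he]

theorem AMem_mem_C_of_AEq (hMC : GBminus M C) (F : ClassForcing M C)
    (hX : AEq F ∈ C) : AMem F ∈ C := by
  have hMt := hMC.transitive
  have hMp : PairClosed M := hMC.pairing
  have hM0 := hMC.empty_mem
  -- the MCond formula on variables (σ, τ, p)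
  have hS : {y : ZFSet | y ∈ M ∧ ∃ p ∈ M, ∃ σ ∈ M, ∃ τ ∈ M, ∃ t ∈ M,
      (((y = ZFSet.pair p t ∧ t = tuple2 σ τ) ∧ p ∈ F.P) ∧
        (NameSem M (AEq F) F.one σ ∧ NameSem M (AEq F) F.one τ)) ∧
        MCond M F (AEq F) σ τ p} ∈ C := by
    exact classC hMC (DF.ex (DF.ex (DF.ex (DF.ex (DF.and
        (DF.and (DF.and (DF.and (DF.rename ![1, 2, 5] (dfKPair hMt hMp))
          (DF.rename ![5, 3, 4] (dfTuple2 hMt hMp hM0))) (DF.clsv 0 2))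
          (DF.and (DF.rename ![3, 0] (dfName hMt hMp hM0 2))
            (DF.rename ![4, 0] (dfName hMt hMp hM0 2))))
        (DF.rename ![3, 4, 2] (DF.all (DF.imp
          (DF.rename ![3, 2] (dfPairMemCls hMt hMp 1))
          (DF.ex (DF.and (DF.rename ![4, 3] (dfPairMemCls hMt hMp 1))
            (DF.rename ![1, 0, 4] (dfWE hMt hMp hM0))))))))))))
      (ΓV F (AEq F) (AEq F)) (ΓV_mem F hX hX) ![F.one] (by
        intro i; fin_cases i; exact F.P_subM _ F.one_mem)
  have he : AMem F = {y : ZFSet | y ∈ M ∧ ∃ p ∈ M, ∃ σ ∈ M, ∃ τ ∈ M, ∃ t ∈ M,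
      (((y = ZFSet.pair p t ∧ t = tuple2 σ τ) ∧ p ∈ F.P) ∧
        (NameSem M (AEq F) F.one σ ∧ NameSem M (AEq F) F.one τ)) ∧
        MCond M F (AEq F) σ τ p} := by
    apply Set.ext
    intro x
    constructor
    · rintro ⟨p, hp, σv, hσv, hFm, rfl⟩
      have hvec : σv = ![σv 0, σv 1] := by
        funext i; fin_cases i <;> rfl
      have htM : tupleZF σv ∈ M := tupleZF_mem hMp hM0 _ (fun i => (hσv i).1)
      have hpM : p ∈ M := F.P_subM p hp
      refine ⟨hMp.pair_mem hpM htM, p, hpM, σv 0, (hσv 0).1, σv 1, (hσv 1).1,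
        tupleZF σv, htM, ⟨⟨⟨rfl, ?_⟩, hp⟩,
          (nameSem_AEq F _).2 (hσv 0), (nameSem_AEq F _).2 (hσv 1)⟩, ?_⟩
      · conv_lhs => rw [hvec]
        rw [tupleZF_two]
      · exact forcesMem_to_MCond hMC hX (hσv 0) (hσv 1) hp
          ((forces_mem_iff 0 1 _ _ _).1 hFm)
    · rintro ⟨hyM, p, hpM, σ, hσM, τ, hτM, t, htM, ⟨⟨⟨hy, ht⟩, hpP⟩, hnσ, hnτ⟩, hA⟩
      have hσn := (nameSem_AEq F σ).1 hnσ
      have hτn := (nameSem_AEq F τ).1 hnτ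
      have hFm : ForcesMem F p σ τ := MCond_forcesMem hMC hX hσn hτn hpP hA
      refine ⟨p, hpP, ![σ, τ], vec2_names hσn hτn, (forces_mem_iff 0 1 _ _ _).2 hFm, ?_⟩
      rw [tupleZF_two, ← ht]
      exact hy
  rwa [he]

/-- **Both atomic forcing classes are in `C`.** -/
theorem atomic_classes (hMC : GBminus M C) (F : ClassForcing M C)
    (h : DefLemma F (CFml.mem 0 1 : Fml 2) ∨ DefLemma F (CFml.eq 0 1 : Fml 2)) :
    AMem F ∈ C ∧ AEq F ∈ C := by
  rcases h with h | h
  · have hX : AMem F ∈ C := h (fun i => i.elim0) (fun i => i.elim0)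
    exact ⟨hX, AEq_mem_C_of_AMem hMC F hX⟩
  · have hX : AEq F ∈ C := h (fun i => i.elim0) (fun i => i.elim0)
    exact ⟨AMem_mem_C_of_AEq hMC F hX, hX⟩

end Phase2


/-! ### Phase 3: the structural induction -/

section Phase3

variable {M : ZFSet} {C : Set (Set ZFSet)}

/-- `dfNT` with cleaned-up semantics. -/
def dfNT' {κ : ℕ} (hMt : M.IsTransitive) (hMp : PairClosed M) (hM0 : (∅ : ZFSet) ∈ M)
    (X : Fin κ) (n : ℕ) : DF M κ 2 :=
  (dfNT hMt hMp hM0 X n).mapSem (fun Γ v => NTsem M (Γ X) (v 1) n (v 0))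
    (fun Γ _ v _ => dfNT_sem hMt hMp hM0 X n Γ v)

/-- `dfProj` with cleaned-up semantics. -/
def dfProj' {κ : ℕ} (hMt : M.IsTransitive) (hMp : PairClosed M) (i : ℕ) : DF M κ 2 :=
  (dfProj hMt hMp i).mapSem (fun _ v => ProjSem M i (v 0) (v 1))
    (fun Γ _ v _ => dfProj_sem hMt hMp i Γ v)

/-- `dfSnoc` with cleaned-up semantics. -/
def dfSnoc' {κ : ℕ} (hMt : M.IsTransitive) (hMp : PairClosed M) (hM0 : (∅ : ZFSet) ∈ M)
    (n : ℕ) : DF M κ 3 :=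
  (dfSnoc hMt hMp hM0 n).mapSem (fun _ v => SnocSem M n (v 0) (v 1) (v 2))
    (fun Γ _ v _ => dfSnoc_sem hMt hMp hM0 n Γ v)

/-- Class parameters used in phase 3: `P`, `≤`, `AEq` (for namehood), two others. -/
def ΓW (F : ClassForcing M C) (X Y : Set ZFSet) : Fin 5 → Set ZFSet :=
  ![F.P, LeCls F, AEq F, X, Y]

theorem ΓW_mem (F : ClassForcing M C) (hAe : AEq F ∈ C) {X Y : Set ZFSet}
    (hX : X ∈ C) (hY : Y ∈ C) : ∀ i, ΓW F X Y i ∈ C := by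
  intro i
  fin_cases i
  · exact F.P_mem
  · exact LeCls_mem F
  · exact hAe
  · exact hX
  · exact hY

/-- The characterization of `NTsem` with namehood. -/
theorem NTn_iff {F : ClassForcing M C} (hMC : GBminus M C) {n : ℕ} {t : ZFSet} :
    NTsem M (AEq F) F.one n t ↔
      ∃ v : Fin n → ZFSet, (∀ i, v i ∈ M ∧ IsName F.P (v i)) ∧ t = tupleZF v :=
  NTsem_iff hMC.pairing hMC.empty_mem (fun σ => nameSem_AEq F σ)

theorem val_comp_snoc (G : Set ZFSet) {n : ℕ} (σ : Fin n → ZFSet) (μ : ZFSet) :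
    (fun i => val G ((Fin.snoc σ μ : Fin (n+1) → ZFSet) i)) =
      (Fin.snoc (fun i => val G (σ i)) (val G μ) : Fin (n+1) → ZFSet) := by
  funext i
  refine Fin.lastCases ?_ (fun j => ?_) i <;> simp

theorem names_snoc {P : Set ZFSet} {n : ℕ} {σ : Fin n → ZFSet} {μ : ZFSet}
    (hσ : ∀ i, σ i ∈ M ∧ IsName P (σ i)) (hμ : μ ∈ M ∧ IsName P μ) :
    ∀ i, (Fin.snoc σ μ : Fin (n+1) → ZFSet) i ∈ M ∧
      IsName P ((Fin.snoc σ μ : Fin (n+1) → ZFSet) i) := by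
  intro i
  refine Fin.lastCases (by simpa using hμ) (fun j => by simpa using hσ j) i

variable {F : ClassForcing M C}

/-- DefLemma class for atomic formulas `v_i ∈/= v_j` at arity `n`,
with `X` the relevant atomic forcing class (slot 3). -/
theorem Atom_class (hMC : GBminus M C) (hAe : AEq F ∈ C) {X : Set ZFSet} (hX : X ∈ C)
    (i j n : ℕ) :
    {y : ZFSet | y ∈ M ∧ ∃ p ∈ M, ∃ t ∈ M,
      (((y = ZFSet.pair p t ∧ p ∈ F.P) ∧ NTsem M (AEq F) F.one n t) ∧
        ∃ a ∈ M, ∃ b ∈ M, ((ProjSem M i t a ∧ ProjSem M j t b) ∧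
          ZFSet.pair p (tuple2 a b) ∈ X))} ∈ C := by
  have hMt := hMC.transitive
  have hMp : PairClosed M := hMC.pairing
  have hM0 := hMC.empty_mem
  exact classC hMC (DF.ex (DF.ex (DF.and
      (DF.and (DF.and (DF.rename ![1, 2, 3] (dfKPair hMt hMp)) (DF.clsv 0 2))
        (DF.rename ![3, 0] (dfNT' hMt hMp hM0 2 n)))
      (DF.ex (DF.ex (DF.and
        (DF.and (DF.rename ![3, 4] (dfProj' hMt hMp i))
          (DF.rename ![3, 5] (dfProj' hMt hMp j)))
        (DF.rename ![2, 4, 5] (dfForcesPair hMt hMp hM0 3))))))))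
    (ΓW F X X) (ΓW_mem F hAe hX hX) ![F.one]
    (by intro i; fin_cases i; exact F.P_subM _ F.one_mem)

/-- `r` settles the name `a` into the class name `Y` (slot 3), using `AEq` (slot 2). -/
def WCl (M : ZFSet) {C : Set (Set ZFSet)} (F : ClassForcing M C) (Y X : Set ZFSet)
    (a r : ZFSet) : Prop :=
  ∃ ρ ∈ M, ∃ s ∈ M, (ZFSet.pair ρ s ∈ Y ∧
    (ZFSet.pair r s ∈ LeCls F ∧ ZFSet.pair r (tuple2 a ρ) ∈ X))

def dfWCl (hMt : M.IsTransitive) (hMp : PairClosed M) (hM0 : (∅ : ZFSet) ∈ M) :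
    DF M 5 2 :=
  DF.ex (DF.ex (DF.and (DF.rename ![2, 3] (dfPairMemCls hMt hMp 3))
    (DF.and (DF.rename ![1, 3] (dfPairMemCls hMt hMp 1))
      (DF.rename ![1, 0, 2] (dfForcesPair hMt hMp hM0 2)))))

/-- First-order description of forcing `a ∈ Y` for a class name `Y`. -/
def CCond (M : ZFSet) {C : Set (Set ZFSet)} (F : ClassForcing M C) (Y X : Set ZFSet)
    (a p : ZFSet) : Prop :=
  ∀ q ∈ M, ZFSet.pair q p ∈ LeCls F →
    ∃ r ∈ M, (ZFSet.pair r q ∈ LeCls F ∧ WCl M F Y X a r)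

theorem DwCl_class (hMC : GBminus M C) (hAe : AEq F ∈ C) {Y : Set ZFSet} (hY : Y ∈ C)
    {a w : ZFSet} (ha : a ∈ M) (hw : w ∈ M) :
    {r : ZFSet | r ∈ M ∧ (r ∈ F.P ∧ (WCl M F Y (AEq F) a r ∨ ¬ CompatC M F r w))} ∈ C := by
  have hMt := hMC.transitive
  have hMp : PairClosed M := hMC.pairing
  have hM0 := hMC.empty_mem
  exact classC hMC ((DF.clsv 0 2).and ((DF.rename ![0, 2] (dfWCl hMt hMp hM0)).or
      (DF.ex ((DF.clsv 0 3).and ((DF.rename ![3, 2] (dfPairMemCls hMt hMp 1)).and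
        (DF.rename ![3, 1] (dfPairMemCls hMt hMp 1))))).not))
    (ΓW F Y Y) (ΓW_mem F hAe hY hY) ![a, w]
    (by intro i; fin_cases i <;> assumption)

/-- DefLemma class for `v_i ∈ Γ_X` at arity `n`, `Y` the class name (slot 3). -/
theorem Cls_class (hMC : GBminus M C) (hAe : AEq F ∈ C) {Y : Set ZFSet} (hY : Y ∈ C)
    (i n : ℕ) :
    {y : ZFSet | y ∈ M ∧ ∃ p ∈ M, ∃ t ∈ M,
      (((y = ZFSet.pair p t ∧ p ∈ F.P) ∧ NTsem M (AEq F) F.one n t) ∧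
        ∃ a ∈ M, (ProjSem M i t a ∧ CCond M F Y (AEq F) a p))} ∈ C := by
  have hMt := hMC.transitive
  have hMp : PairClosed M := hMC.pairing
  have hM0 := hMC.empty_mem
  exact classC hMC (DF.ex (DF.ex (DF.and
      (DF.and (DF.and (DF.rename ![1, 2, 3] (dfKPair hMt hMp)) (DF.clsv 0 2))
        (DF.rename ![3, 0] (dfNT' hMt hMp hM0 2 n)))
      (DF.ex (DF.and (DF.rename ![3, 4] (dfProj' hMt hMp i))
        (DF.all (DF.imp (DF.rename ![5, 2] (dfPairMemCls hMt hMp 1))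
          (DF.ex (DF.and (DF.rename ![6, 5] (dfPairMemCls hMt hMp 1))
            (DF.rename ![4, 6] (dfWCl hMt hMp hM0)))))))))))
    (ΓW F Y Y) (ΓW_mem F hAe hY hY) ![F.one]
    (by intro i; fin_cases i; exact F.P_subM _ F.one_mem)

/-- DefLemma class for a negation, `Xφ` in slot 3. -/
theorem Not_class (hMC : GBminus M C) (hAe : AEq F ∈ C) {Xφ : Set ZFSet} (hX : Xφ ∈ C)
    (n : ℕ) :
    {y : ZFSet | y ∈ M ∧ ∃ p ∈ M, ∃ t ∈ M,
      (((y = ZFSet.pair p t ∧ p ∈ F.P) ∧ NTsem M (AEq F) F.one n t) ∧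
        ∀ q ∈ M, ZFSet.pair q p ∈ LeCls F → ZFSet.pair q t ∉ Xφ)} ∈ C := by
  have hMt := hMC.transitive
  have hMp : PairClosed M := hMC.pairing
  have hM0 := hMC.empty_mem
  exact classC hMC (DF.ex (DF.ex (DF.and
      (DF.and (DF.and (DF.rename ![1, 2, 3] (dfKPair hMt hMp)) (DF.clsv 0 2))
        (DF.rename ![3, 0] (dfNT' hMt hMp hM0 2 n)))
      (DF.all (DF.imp (DF.rename ![4, 2] (dfPairMemCls hMt hMp 1))
        (DF.not (DF.rename ![4, 3] (dfPairMemCls hMt hMp 3))))))))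
    (ΓW F Xφ Xφ) (ΓW_mem F hAe hX hX) ![F.one]
    (by intro i; fin_cases i; exact F.P_subM _ F.one_mem)

/-- Dense class for the truth lemma of a negation. -/
theorem DNot_class (hMC : GBminus M C) (hAe : AEq F ∈ C) {Xφ : Set ZFSet} (hX : Xφ ∈ C)
    {t : ZFSet} (ht : t ∈ M) :
    {r : ZFSet | r ∈ M ∧ (r ∈ F.P ∧ (ZFSet.pair r t ∈ Xφ ∨
      ∀ q ∈ M, ZFSet.pair q r ∈ LeCls F → ZFSet.pair q t ∉ Xφ))} ∈ C := by
  have hMt := hMC.transitive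
  have hMp : PairClosed M := hMC.pairing
  exact classC hMC ((DF.clsv 0 1).and ((DF.rename ![1, 0] (dfPairMemCls hMt hMp 3)).or
      (DF.all (DF.imp (DF.rename ![2, 1] (dfPairMemCls hMt hMp 1))
        (DF.not (DF.rename ![2, 0] (dfPairMemCls hMt hMp 3)))))))
    (ΓW F Xφ Xφ) (ΓW_mem F hAe hX hX) ![t]
    (by intro i; fin_cases i; exact ht)

/-- DefLemma class for a disjunction, `Xφ` slot 3, `Xψ` slot 4. -/
theorem Or_class (hMC : GBminus M C) (hAe : AEq F ∈ C) {Xφ Xψ : Set ZFSet}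
    (hX : Xφ ∈ C) (hY : Xψ ∈ C) (n : ℕ) :
    {y : ZFSet | y ∈ M ∧ ∃ p ∈ M, ∃ t ∈ M,
      (((y = ZFSet.pair p t ∧ p ∈ F.P) ∧ NTsem M (AEq F) F.one n t) ∧
        ∀ q ∈ M, ZFSet.pair q p ∈ LeCls F → ∃ r ∈ M,
          (ZFSet.pair r q ∈ LeCls F ∧
            (ZFSet.pair r t ∈ Xφ ∨ ZFSet.pair r t ∈ Xψ)))} ∈ C := by
  have hMt := hMC.transitive
  have hMp : PairClosed M := hMC.pairing
  have hM0 := hMC.empty_mem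
  exact classC hMC (DF.ex (DF.ex (DF.and
      (DF.and (DF.and (DF.rename ![1, 2, 3] (dfKPair hMt hMp)) (DF.clsv 0 2))
        (DF.rename ![3, 0] (dfNT' hMt hMp hM0 2 n)))
      (DF.all (DF.imp (DF.rename ![4, 2] (dfPairMemCls hMt hMp 1))
        (DF.ex (DF.and (DF.rename ![5, 4] (dfPairMemCls hMt hMp 1))
          ((DF.rename ![5, 3] (dfPairMemCls hMt hMp 3)).or
           (DF.rename ![5, 3] (dfPairMemCls hMt hMp 4))))))))))
    (ΓW F Xφ Xψ) (ΓW_mem F hAe hX hY) ![F.one]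
    (by intro i; fin_cases i; exact F.P_subM _ F.one_mem)

/-- Dense class for the disjunction case. -/
theorem DOr_class (hMC : GBminus M C) (hAe : AEq F ∈ C) {Xφ Xψ : Set ZFSet}
    (hX : Xφ ∈ C) (hY : Xψ ∈ C) {p t : ZFSet} (hp : p ∈ M) (ht : t ∈ M) :
    {r : ZFSet | r ∈ M ∧ (r ∈ F.P ∧
      ((ZFSet.pair r t ∈ Xφ ∨ ZFSet.pair r t ∈ Xψ) ∨ ¬ CompatC M F r p))} ∈ C := by
  have hMt := hMC.transitive
  have hMp : PairClosed M := hMC.pairing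
  exact classC hMC ((DF.clsv 0 2).and
      ((((DF.rename ![2, 1] (dfPairMemCls hMt hMp 3)).or
         (DF.rename ![2, 1] (dfPairMemCls hMt hMp 4)))).or
       (DF.ex ((DF.clsv 0 3).and ((DF.rename ![3, 2] (dfPairMemCls hMt hMp 1)).and
         (DF.rename ![3, 0] (dfPairMemCls hMt hMp 1))))).not))
    (ΓW F Xφ Xψ) (ΓW_mem F hAe hX hY) ![p, t]
    (by intro i; fin_cases i <;> assumption)

/-- DefLemma class for an existential, `Xφ` slot 3. -/
theorem Ex_class (hMC : GBminus M C) (hAe : AEq F ∈ C) {Xφ : Set ZFSet} (hX : Xφ ∈ C)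
    (n : ℕ) :
    {y : ZFSet | y ∈ M ∧ ∃ p ∈ M, ∃ t ∈ M,
      (((y = ZFSet.pair p t ∧ p ∈ F.P) ∧ NTsem M (AEq F) F.one n t) ∧
        ∀ q ∈ M, ZFSet.pair q p ∈ LeCls F → ∃ r ∈ M,
          (ZFSet.pair r q ∈ LeCls F ∧ ∃ μ ∈ M, ∃ t' ∈ M,
            (SnocSem M n t μ t' ∧ ZFSet.pair r t' ∈ Xφ)))} ∈ C := by
  have hMt := hMC.transitive
  have hMp : PairClosed M := hMC.pairing
  have hM0 := hMC.empty_mem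
  exact classC hMC (DF.ex (DF.ex (DF.and
      (DF.and (DF.and (DF.rename ![1, 2, 3] (dfKPair hMt hMp)) (DF.clsv 0 2))
        (DF.rename ![3, 0] (dfNT' hMt hMp hM0 2 n)))
      (DF.all (DF.imp (DF.rename ![4, 2] (dfPairMemCls hMt hMp 1))
        (DF.ex (DF.and (DF.rename ![5, 4] (dfPairMemCls hMt hMp 1))
          (DF.ex (DF.ex (DF.and (DF.rename ![3, 6, 7] (dfSnoc' hMt hMp hM0 n))
            (DF.rename ![5, 7] (dfPairMemCls hMt hMp 3))))))))))))
    (ΓW F Xφ Xφ) (ΓW_mem F hAe hX hX) ![F.one]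
    (by intro i; fin_cases i; exact F.P_subM _ F.one_mem)

/-- Dense class for the existential case. -/
theorem DEx_class (hMC : GBminus M C) (hAe : AEq F ∈ C) {Xφ : Set ZFSet} (hX : Xφ ∈ C)
    (n : ℕ) {p t : ZFSet} (hp : p ∈ M) (ht : t ∈ M) :
    {r : ZFSet | r ∈ M ∧ (r ∈ F.P ∧
      ((∃ μ ∈ M, ∃ t' ∈ M, (SnocSem M n t μ t' ∧ ZFSet.pair r t' ∈ Xφ)) ∨
        ¬ CompatC M F r p))} ∈ C := by
  have hMt := hMC.transitive
  have hMp : PairClosed M := hMC.pairing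
  have hM0 := hMC.empty_mem
  exact classC hMC ((DF.clsv 0 2).and
      ((DF.ex (DF.ex (DF.and (DF.rename ![1, 3, 4] (dfSnoc' hMt hMp hM0 n))
         (DF.rename ![2, 4] (dfPairMemCls hMt hMp 3))))).or
       (DF.ex ((DF.clsv 0 3).and ((DF.rename ![3, 2] (dfPairMemCls hMt hMp 1)).and
         (DF.rename ![3, 0] (dfPairMemCls hMt hMp 1))))).not))
    (ΓW F Xφ Xφ) (ΓW_mem F hAe hX hX) ![p, t]
    (by intro i; fin_cases i <;> assumption)

theorem CCond_forces (hMC : GBminus M C) (hAe : AEq F ∈ C) {Y : Set ZFSet}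
    (hY : IsClassName M C F.P Y) {a p : ZFSet} (ha : NameM M F.P a) (hp : p ∈ F.P)
    (hC : CCond M F Y (AEq F) a p) :
    ∀ G : Set ZFSet, IsGeneric F G → p ∈ G → val G a ∈ classVal G Y := by
  intro G hG hpG
  have hD := DwCl_class hMC hAe hY.1 ha.1 (F.P_subM p hp)
  have hdense : DenseIn F.P F.le
      {r : ZFSet | r ∈ M ∧ (r ∈ F.P ∧ (WCl M F Y (AEq F) a r ∨ ¬ CompatC M F r p))} := by
    intro t htP
    by_cases hc : CompatC M F t p
    · obtain ⟨u, huM, huP, hut, hup⟩ := hc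
      obtain ⟨r, hrM, hrq, hW⟩ := hC u huM hup
      have hrleP := pair_mem_LeCls.1 hrq
      exact ⟨r, ⟨hrM, hrleP.1, Or.inl hW⟩, hrleP.1,
        F.le_trans r hrleP.1 u huP t htP hrleP.2.2 (pair_mem_LeCls.1 hut).2.2⟩
    · exact ⟨t, ⟨F.P_subM t htP, htP, Or.inr hc⟩, htP, F.le_refl t htP⟩
  obtain ⟨r, hrD, hrG⟩ := hG.meets _ hD (fun r hr => hr.2.1) hdense
  rcases hrD.2.2 with hW | hnc
  · obtain ⟨ρ, hρM, s, hsM, hρs, hrs, hXm⟩ := hW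
    obtain ⟨τ0, p0, hτ0M, hτ0n, hp0P, heqp⟩ := hY.2 _ hρs
    obtain ⟨rfl, rfl⟩ := ZFSet.pair_injective heqp
    have hFeq := (of_mem_AEq hXm).2.2.2
    have hsG : s ∈ G := hG.upward r hrG s hp0P (pair_mem_LeCls.1 hrs).2.2
    exact ⟨ρ, s, hsG, hρs, hFeq G hG hrG⟩
  · exact absurd (compatC_of_mem_generic hG hrG hpG) hnc

theorem forces_CCond (hMC : GBminus M C) (hAe : AEq F ∈ C) {Y : Set ZFSet}
    (hY : IsClassName M C F.P Y) {a p : ZFSet} (ha : NameM M F.P a) (hp : p ∈ F.P)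
    (hF : ∀ G : Set ZFSet, IsGeneric F G → p ∈ G → val G a ∈ classVal G Y) :
    CCond M F Y (AEq F) a p := by
  intro q hqM hqle
  have hq := pair_mem_LeCls.1 hqle
  obtain ⟨G, hG, hqG⟩ := exists_generic hMC F hq.1
  have hpG := hG.upward q hqG p hp hq.2.2
  obtain ⟨ρ, s, hsG, hρs, hv⟩ := hF G hG hpG
  obtain ⟨τ0, p0, hτ0M, hτ0n, hp0P, heqp⟩ := hY.2 _ hρs
  obtain ⟨rfl, rfl⟩ := ZFSet.pair_injective heqp
  obtain ⟨q', hq'G, hF'⟩ :=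
    (truth_atomic hMC F (Or.inr hAe) a ρ ha ⟨hτ0M, hτ0n⟩).1 G hG hv
  obtain ⟨r, hrG, hrP, hr1, hr2, hr3⟩ := hG.descend₃ hqG hsG hq'G
  exact ⟨r, F.P_subM r hrP, pair_mem_LeCls.2 ⟨hrP, hq.1, hr1⟩,
    ρ, hτ0M, s, F.P_subM s hp0P, hρs, pair_mem_LeCls.2 ⟨hrP, hp0P, hr2⟩,
    (mem_AEq ha ⟨hτ0M, hτ0n⟩).2 ⟨hrP, hF'.mono (hG.sub hq'G) hrP hr3⟩⟩

/-- **The forcing theorem for all formulas**, given both atomic classes. -/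
theorem forcingThm_all (hMC : GBminus M C) (F : ClassForcing M C)
    (hAm : AMem F ∈ C) (hAe : AEq F ∈ C) :
    ∀ {κ n : ℕ} (φ : CFml κ n), DefLemma F φ ∧ TruthLemma F φ := by
  intro κ n φ
  induction φ with
  | @mem n i j =>
    have hMp : PairClosed M := hMC.pairing
    have hM0 := hMC.empty_mem
    constructor
    · intro Γ hΓ
      show defCls F (CFml.mem i j) Γ ∈ C
      have hS := Atom_class (F := F) hMC hAe hAm i.val j.val n
      have he : defCls F (CFml.mem i j) Γ =
          {y : ZFSet | y ∈ M ∧ ∃ p ∈ M, ∃ t ∈ M,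
            (((y = ZFSet.pair p t ∧ p ∈ F.P) ∧ NTsem M (AEq F) F.one n t) ∧
              ∃ a ∈ M, ∃ b ∈ M, ((ProjSem M i.val t a ∧ ProjSem M j.val t b) ∧
                ZFSet.pair p (tuple2 a b) ∈ AMem F))} := by
        apply Set.ext
        intro x
        constructor
        · rintro ⟨p, hp, σ, hσ, hF, rfl⟩
          have hv : ∀ k, σ k ∈ M := fun k => (hσ k).1
          have htM : tupleZF σ ∈ M := tupleZF_mem hMp hM0 _ hv
          refine ⟨hMp.pair_mem (F.P_subM p hp) htM, p, F.P_subM p hp, tupleZF σ, htM,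
            ⟨⟨rfl, hp⟩, (NTn_iff hMC).2 ⟨σ, hσ, rfl⟩⟩, σ i, hv i, σ j, hv j,
            ⟨(ProjSem_iff hMp hM0 σ hv i _).2 rfl, (ProjSem_iff hMp hM0 σ hv j _).2 rfl⟩,
            (mem_AMem (hσ i) (hσ j)).2 ⟨hp, (forces_mem_iff i j Γ p σ).1 hF⟩⟩
        · rintro ⟨hyM, p, hpM, t, htM, ⟨⟨rfl, hpP⟩, hNT⟩, a, haM, b, hbM,
            ⟨hpi, hpj⟩, hmem⟩
          obtain ⟨σ, hσ, rfl⟩ := (NTn_iff hMC).1 hNT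
          have hv : ∀ k, σ k ∈ M := fun k => (hσ k).1
          obtain rfl := (ProjSem_iff hMp hM0 σ hv i _).1 hpi
          obtain rfl := (ProjSem_iff hMp hM0 σ hv j _).1 hpj
          exact ⟨p, hpP, σ, hσ,
            (forces_mem_iff i j Γ p σ).2 ((mem_AMem (hσ i) (hσ j)).1 hmem).2, rfl⟩
      rw [he]
      exact hS
    · intro Γ hΓ σ hσ G hG hsat
      rw [satC_mem] at hsat
      obtain ⟨p, hpG, hFm⟩ :=
        (truth_atomic hMC F (Or.inr hAe) (σ i) (σ j) (hσ i) (hσ j)).2 G hG hsat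
      exact ⟨p, hpG, (forces_mem_iff i j Γ p σ).2 hFm⟩
  | @eq n i j =>
    have hMp : PairClosed M := hMC.pairing
    have hM0 := hMC.empty_mem
    constructor
    · intro Γ hΓ
      show defCls F (CFml.eq i j) Γ ∈ C
      have hS := Atom_class (F := F) hMC hAe hAe i.val j.val n
      have he : defCls F (CFml.eq i j) Γ =
          {y : ZFSet | y ∈ M ∧ ∃ p ∈ M, ∃ t ∈ M,
            (((y = ZFSet.pair p t ∧ p ∈ F.P) ∧ NTsem M (AEq F) F.one n t) ∧
              ∃ a ∈ M, ∃ b ∈ M, ((ProjSem M i.val t a ∧ ProjSem M j.val t b) ∧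
                ZFSet.pair p (tuple2 a b) ∈ AEq F))} := by
        apply Set.ext
        intro x
        constructor
        · rintro ⟨p, hp, σ, hσ, hF, rfl⟩
          have hv : ∀ k, σ k ∈ M := fun k => (hσ k).1
          have htM : tupleZF σ ∈ M := tupleZF_mem hMp hM0 _ hv
          refine ⟨hMp.pair_mem (F.P_subM p hp) htM, p, F.P_subM p hp, tupleZF σ, htM,
            ⟨⟨rfl, hp⟩, (NTn_iff hMC).2 ⟨σ, hσ, rfl⟩⟩, σ i, hv i, σ j, hv j,
            ⟨(ProjSem_iff hMp hM0 σ hv i _).2 rfl, (ProjSem_iff hMp hM0 σ hv j _).2 rfl⟩,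
            (mem_AEq (hσ i) (hσ j)).2 ⟨hp, (forces_eq_iff i j Γ p σ).1 hF⟩⟩
        · rintro ⟨hyM, p, hpM, t, htM, ⟨⟨rfl, hpP⟩, hNT⟩, a, haM, b, hbM,
            ⟨hpi, hpj⟩, hmem⟩
          obtain ⟨σ, hσ, rfl⟩ := (NTn_iff hMC).1 hNT
          have hv : ∀ k, σ k ∈ M := fun k => (hσ k).1
          obtain rfl := (ProjSem_iff hMp hM0 σ hv i _).1 hpi
          obtain rfl := (ProjSem_iff hMp hM0 σ hv j _).1 hpj
          exact ⟨p, hpP, σ, hσ,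
            (forces_eq_iff i j Γ p σ).2 ((mem_AEq (hσ i) (hσ j)).1 hmem).2, rfl⟩
      rw [he]
      exact hS
    · intro Γ hΓ σ hσ G hG hsat
      rw [satC_eq] at hsat
      obtain ⟨p, hpG, hFe⟩ :=
        (truth_atomic hMC F (Or.inr hAe) (σ i) (σ j) (hσ i) (hσ j)).1 G hG hsat
      exact ⟨p, hpG, (forces_eq_iff i j Γ p σ).2 hFe⟩
  | @cls n X i =>
    have hMp : PairClosed M := hMC.pairing
    have hM0 := hMC.empty_mem
    constructor
    · intro Γ hΓ
      show defCls F (CFml.cls X i) Γ ∈ C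
      have hS := Cls_class (F := F) hMC hAe (hΓ X).1 i.val n
      have he : defCls F (CFml.cls X i) Γ =
          {y : ZFSet | y ∈ M ∧ ∃ p ∈ M, ∃ t ∈ M,
            (((y = ZFSet.pair p t ∧ p ∈ F.P) ∧ NTsem M (AEq F) F.one n t) ∧
              ∃ a ∈ M, (ProjSem M i.val t a ∧ CCond M F (Γ X) (AEq F) a p))} := by
        apply Set.ext
        intro x
        constructor
        · rintro ⟨p, hp, σ, hσ, hF, rfl⟩
          have hv : ∀ k, σ k ∈ M := fun k => (hσ k).1
          have htM : tupleZF σ ∈ M := tupleZF_mem hMp hM0 _ hv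
          refine ⟨hMp.pair_mem (F.P_subM p hp) htM, p, F.P_subM p hp, tupleZF σ, htM,
            ⟨⟨rfl, hp⟩, (NTn_iff hMC).2 ⟨σ, hσ, rfl⟩⟩, σ i, hv i,
            (ProjSem_iff hMp hM0 σ hv i _).2 rfl,
            forces_CCond hMC hAe (hΓ X) (hσ i) hp ?_⟩
          intro G hG hpG
          have := hF G hG hpG
          rwa [satC_cls] at this
        · rintro ⟨hyM, p, hpM, t, htM, ⟨⟨rfl, hpP⟩, hNT⟩, a, haM, hpi, hCC⟩
          obtain ⟨σ, hσ, rfl⟩ := (NTn_iff hMC).1 hNT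
          have hv : ∀ k, σ k ∈ M := fun k => (hσ k).1
          obtain rfl := (ProjSem_iff hMp hM0 σ hv i _).1 hpi
          refine ⟨p, hpP, σ, hσ, ?_, rfl⟩
          intro G hG hpG
          rw [satC_cls]
          exact CCond_forces hMC hAe (hΓ X) (hσ i) hpP hCC G hG hpG
      rw [he]
      exact hS
    · intro Γ hΓ σ hσ G hG hsat
      rw [satC_cls] at hsat
      obtain ⟨ρ, s, hsG, hρs, hv⟩ := hsat
      obtain ⟨τ0, p0, hτ0M, hτ0n, hp0P, heqp⟩ := (hΓ X).2 _ hρs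
      obtain ⟨rfl, rfl⟩ := ZFSet.pair_injective heqp
      obtain ⟨q, hqG, hqF⟩ :=
        (truth_atomic hMC F (Or.inr hAe) (σ i) ρ (hσ i) ⟨hτ0M, hτ0n⟩).1 G hG hv
      obtain ⟨r, hrG, hrP, hr1, hr2⟩ := hG.descend₂ hqG hsG
      refine ⟨r, hrG, fun G' hG' hrG' => ?_⟩
      rw [satC_cls]
      have hsG' : s ∈ G' := hG'.upward r hrG' s hp0P hr2
      have hqG' : q ∈ G' := hG'.upward r hrG' q (hG.sub hqG) hr1
      exact ⟨ρ, s, hsG', hρs, hqF G' hG' hqG'⟩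
  | @not n φ ih =>
    have hMp : PairClosed M := hMC.pairing
    have hM0 := hMC.empty_mem
    constructor
    · intro Γ hΓ
      show defCls F (CFml.not φ) Γ ∈ C
      have hS := Not_class (F := F) hMC hAe (ih.1 Γ hΓ) n
      have he : defCls F (CFml.not φ) Γ =
          {y : ZFSet | y ∈ M ∧ ∃ p ∈ M, ∃ t ∈ M,
            (((y = ZFSet.pair p t ∧ p ∈ F.P) ∧ NTsem M (AEq F) F.one n t) ∧
              ∀ q ∈ M, ZFSet.pair q p ∈ LeCls F →
                ZFSet.pair q t ∉ defCls F φ Γ)} := by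
        apply Set.ext
        intro x
        constructor
        · rintro ⟨p, hp, σ, hσ, hF, rfl⟩
          have hv : ∀ k, σ k ∈ M := fun k => (hσ k).1
          have htM : tupleZF σ ∈ M := tupleZF_mem hMp hM0 _ hv
          refine ⟨hMp.pair_mem (F.P_subM p hp) htM, p, F.P_subM p hp, tupleZF σ, htM,
            ⟨⟨rfl, hp⟩, (NTn_iff hMC).2 ⟨σ, hσ, rfl⟩⟩, ?_⟩
          intro q hqM hqle hmem
          obtain ⟨hqP, hFq⟩ := (mem_defCls hσ).1 hmem
          obtain ⟨G, hG, hqG⟩ := exists_generic hMC F hqP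
          have hpG := hG.upward q hqG p hp (pair_mem_LeCls.1 hqle).2.2
          have h1 := hF G hG hpG
          rw [satC_not] at h1
          exact h1 (hFq G hG hqG)
        · rintro ⟨hyM, p, hpM, t, htM, ⟨⟨rfl, hpP⟩, hNT⟩, hNC⟩
          obtain ⟨σ, hσ, rfl⟩ := (NTn_iff hMC).1 hNT
          refine ⟨p, hpP, σ, hσ, ?_, rfl⟩
          intro G hG hpG
          rw [satC_not]
          intro hsat
          obtain ⟨r', hr'G, hFφ⟩ := ih.2 Γ hΓ σ hσ G hG hsat
          obtain ⟨q, hqG, hqP, hq1, hq2⟩ := hG.descend₂ hpG hr'G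
          exact hNC q (F.P_subM q hqP) (pair_mem_LeCls.2 ⟨hqP, hpP, hq1⟩)
            ((mem_defCls hσ).2 ⟨hqP, hFφ.mono (hG.sub hr'G) hqP hq2⟩)
      rw [he]
      exact hS
    · intro Γ hΓ σ hσ G hG hsat
      rw [satC_not] at hsat
      have hv : ∀ k, σ k ∈ M := fun k => (hσ k).1
      have htM : tupleZF σ ∈ M := tupleZF_mem hMp hM0 _ hv
      have hD := DNot_class (F := F) hMC hAe (ih.1 Γ hΓ) htM
      have hdense : DenseIn F.P F.le
          {r : ZFSet | r ∈ M ∧ (r ∈ F.P ∧ (ZFSet.pair r (tupleZF σ) ∈ defCls F φ Γ ∨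
            ∀ q ∈ M, ZFSet.pair q r ∈ LeCls F →
              ZFSet.pair q (tupleZF σ) ∉ defCls F φ Γ))} := by
        intro r hrP
        by_cases hc : ∃ q ∈ M, ZFSet.pair q r ∈ LeCls F ∧
            ZFSet.pair q (tupleZF σ) ∈ defCls F φ Γ
        · obtain ⟨q, hqM, hqle, hqm⟩ := hc
          have hq := pair_mem_LeCls.1 hqle
          exact ⟨q, ⟨hqM, hq.1, Or.inl hqm⟩, hq.1, hq.2.2⟩
        · push_neg at hc
          exact ⟨r, ⟨F.P_subM r hrP, hrP, Or.inr hc⟩, hrP, F.le_refl r hrP⟩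
      obtain ⟨p0, ⟨hp0M, hp0P, hor⟩, hp0G⟩ := hG.meets _ hD (fun r hr => hr.2.1) hdense
      rcases hor with hmem | hNC
      · exact absurd (((mem_defCls hσ).1 hmem).2 G hG hp0G) hsat
      · refine ⟨p0, hp0G, fun G' hG' hp0G' => ?_⟩
        rw [satC_not]
        intro hsat'
        obtain ⟨r', hr'G, hFφ⟩ := ih.2 Γ hΓ σ hσ G' hG' hsat'
        obtain ⟨q, hqG, hqP, hq1, hq2⟩ := hG'.descend₂ hp0G' hr'G
        exact hNC q (F.P_subM q hqP) (pair_mem_LeCls.2 ⟨hqP, hp0P, hq1⟩)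
          ((mem_defCls hσ).2 ⟨hqP, hFφ.mono (hG'.sub hr'G) hqP hq2⟩)
  | @or n φ ψ ih1 ih2 =>
    have hMp : PairClosed M := hMC.pairing
    have hM0 := hMC.empty_mem
    constructor
    · intro Γ hΓ
      show defCls F (CFml.or φ ψ) Γ ∈ C
      have hS := Or_class (F := F) hMC hAe (ih1.1 Γ hΓ) (ih2.1 Γ hΓ) n
      have he : defCls F (CFml.or φ ψ) Γ =
          {y : ZFSet | y ∈ M ∧ ∃ p ∈ M, ∃ t ∈ M,
            (((y = ZFSet.pair p t ∧ p ∈ F.P) ∧ NTsem M (AEq F) F.one n t) ∧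
              ∀ q ∈ M, ZFSet.pair q p ∈ LeCls F → ∃ r ∈ M,
                (ZFSet.pair r q ∈ LeCls F ∧
                  (ZFSet.pair r t ∈ defCls F φ Γ ∨
                   ZFSet.pair r t ∈ defCls F ψ Γ)))} := by
        apply Set.ext
        intro x
        constructor
        · rintro ⟨p, hp, σ, hσ, hF, rfl⟩
          have hv : ∀ k, σ k ∈ M := fun k => (hσ k).1
          have htM : tupleZF σ ∈ M := tupleZF_mem hMp hM0 _ hv
          refine ⟨hMp.pair_mem (F.P_subM p hp) htM, p, F.P_subM p hp, tupleZF σ, htM,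
            ⟨⟨rfl, hp⟩, (NTn_iff hMC).2 ⟨σ, hσ, rfl⟩⟩, ?_⟩
          intro q hqM hqle
          have hq := pair_mem_LeCls.1 hqle
          obtain ⟨G, hG, hqG⟩ := exists_generic hMC F hq.1
          have hpG := hG.upward q hqG p hp hq.2.2
          have h1 := hF G hG hpG
          rw [satC_or] at h1
          rcases h1 with h1 | h1
          · obtain ⟨r', hr'G, hFφ⟩ := ih1.2 Γ hΓ σ hσ G hG h1
            obtain ⟨r, hrG, hrP, hr1, hr2⟩ := hG.descend₂ hqG hr'G
            exact ⟨r, F.P_subM r hrP, pair_mem_LeCls.2 ⟨hrP, hq.1, hr1⟩,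
              Or.inl ((mem_defCls hσ).2 ⟨hrP, hFφ.mono (hG.sub hr'G) hrP hr2⟩)⟩
          · obtain ⟨r', hr'G, hFψ⟩ := ih2.2 Γ hΓ σ hσ G hG h1
            obtain ⟨r, hrG, hrP, hr1, hr2⟩ := hG.descend₂ hqG hr'G
            exact ⟨r, F.P_subM r hrP, pair_mem_LeCls.2 ⟨hrP, hq.1, hr1⟩,
              Or.inr ((mem_defCls hσ).2 ⟨hrP, hFψ.mono (hG.sub hr'G) hrP hr2⟩)⟩
        · rintro ⟨hyM, p, hpM, t, htM, ⟨⟨rfl, hpP⟩, hNT⟩, hOC⟩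
          obtain ⟨σ, hσ, rfl⟩ := (NTn_iff hMC).1 hNT
          refine ⟨p, hpP, σ, hσ, ?_, rfl⟩
          intro G hG hpG
          rw [satC_or]
          have hD := DOr_class (F := F) hMC hAe (ih1.1 Γ hΓ) (ih2.1 Γ hΓ)
            (F.P_subM p hpP) (tupleZF_mem hMp hM0 _ (fun k => (hσ k).1))
          have hdense : DenseIn F.P F.le
              {r : ZFSet | r ∈ M ∧ (r ∈ F.P ∧
                ((ZFSet.pair r (tupleZF σ) ∈ defCls F φ Γ ∨
                  ZFSet.pair r (tupleZF σ) ∈ defCls F ψ Γ) ∨ ¬ CompatC M F r p))} := by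
            intro t0 ht0P
            by_cases hc : CompatC M F t0 p
            · obtain ⟨u, huM, huP, hut, hup⟩ := hc
              obtain ⟨r, hrM, hrq, hor⟩ := hOC u huM hup
              have hrleP := pair_mem_LeCls.1 hrq
              exact ⟨r, ⟨hrM, hrleP.1, Or.inl hor⟩, hrleP.1,
                F.le_trans r hrleP.1 u huP t0 ht0P hrleP.2.2 (pair_mem_LeCls.1 hut).2.2⟩
            · exact ⟨t0, ⟨F.P_subM t0 ht0P, ht0P, Or.inr hc⟩, ht0P, F.le_refl t0 ht0P⟩
          obtain ⟨r, ⟨hrM, hrP, hor⟩, hrG⟩ := hG.meets _ hD (fun r hr => hr.2.1) hdense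
          rcases hor with (hm | hm) | hnc
          · exact Or.inl (((mem_defCls hσ).1 hm).2 G hG hrG)
          · exact Or.inr (((mem_defCls hσ).1 hm).2 G hG hrG)
          · exact absurd (compatC_of_mem_generic hG hrG hpG) hnc
      rw [he]
      exact hS
    · intro Γ hΓ σ hσ G hG hsat
      rw [satC_or] at hsat
      rcases hsat with hsat | hsat
      · obtain ⟨p, hpG, hFφ⟩ := ih1.2 Γ hΓ σ hσ G hG hsat
        exact ⟨p, hpG, fun G' hG' hpG' => by
          rw [satC_or]; exact Or.inl (hFφ G' hG' hpG')⟩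
      · obtain ⟨p, hpG, hFψ⟩ := ih2.2 Γ hΓ σ hσ G hG hsat
        exact ⟨p, hpG, fun G' hG' hpG' => by
          rw [satC_or]; exact Or.inr (hFψ G' hG' hpG')⟩
  | @ex n φ ih =>
    have hMp : PairClosed M := hMC.pairing
    have hM0 := hMC.empty_mem
    constructor
    · intro Γ hΓ
      show defCls F (CFml.ex φ) Γ ∈ C
      have hS := Ex_class (F := F) hMC hAe (ih.1 Γ hΓ) n
      have he : defCls F (CFml.ex φ) Γ =
          {y : ZFSet | y ∈ M ∧ ∃ p ∈ M, ∃ t ∈ M,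
            (((y = ZFSet.pair p t ∧ p ∈ F.P) ∧ NTsem M (AEq F) F.one n t) ∧
              ∀ q ∈ M, ZFSet.pair q p ∈ LeCls F → ∃ r ∈ M,
                (ZFSet.pair r q ∈ LeCls F ∧ ∃ μ ∈ M, ∃ t' ∈ M,
                  (SnocSem M n t μ t' ∧ ZFSet.pair r t' ∈ defCls F φ Γ)))} := by
        apply Set.ext
        intro x
        constructor
        · rintro ⟨p, hp, σ, hσ, hF, rfl⟩
          have hv : ∀ k, σ k ∈ M := fun k => (hσ k).1
          have htM : tupleZF σ ∈ M := tupleZF_mem hMp hM0 _ hv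
          refine ⟨hMp.pair_mem (F.P_subM p hp) htM, p, F.P_subM p hp, tupleZF σ, htM,
            ⟨⟨rfl, hp⟩, (NTn_iff hMC).2 ⟨σ, hσ, rfl⟩⟩, ?_⟩
          intro q hqM hqle
          have hq := pair_mem_LeCls.1 hqle
          obtain ⟨G, hG, hqG⟩ := exists_generic hMC F hq.1
          have hpG := hG.upward q hqG p hp hq.2.2
          have h1 := hF G hG hpG
          rw [satC_ex] at h1
          obtain ⟨x, hxMG, hs⟩ := h1
          obtain ⟨μ, hμM, hμn, rfl⟩ := hxMG
          rw [← val_comp_snoc] at hs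
          obtain ⟨r', hr'G, hFφ⟩ := ih.2 Γ hΓ _ (names_snoc hσ ⟨hμM, hμn⟩) G hG hs
          obtain ⟨r, hrG, hrP, hr1, hr2⟩ := hG.descend₂ hqG hr'G
          refine ⟨r, F.P_subM r hrP, pair_mem_LeCls.2 ⟨hrP, hq.1, hr1⟩, μ, hμM,
            tupleZF (Fin.snoc σ μ : Fin (n+1) → ZFSet),
            tupleZF_mem hMp hM0 _ (fun k => (names_snoc hσ ⟨hμM, hμn⟩ k).1),
            (SnocSem_iff hMp hM0 hμM σ hv _).2 rfl, ?_⟩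
          exact (mem_defCls (names_snoc hσ ⟨hμM, hμn⟩)).2
            ⟨hrP, hFφ.mono (hG.sub hr'G) hrP hr2⟩
        · rintro ⟨hyM, p, hpM, t, htM, ⟨⟨rfl, hpP⟩, hNT⟩, hEC⟩
          obtain ⟨σ, hσ, rfl⟩ := (NTn_iff hMC).1 hNT
          have hv : ∀ k, σ k ∈ M := fun k => (hσ k).1
          refine ⟨p, hpP, σ, hσ, ?_, rfl⟩
          intro G hG hpG
          rw [satC_ex]
          have hD := DEx_class (F := F) hMC hAe (ih.1 Γ hΓ) n
            (F.P_subM p hpP) (tupleZF_mem hMp hM0 _ hv)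
          have hdense : DenseIn F.P F.le
              {r : ZFSet | r ∈ M ∧ (r ∈ F.P ∧
                ((∃ μ ∈ M, ∃ t' ∈ M, (SnocSem M n (tupleZF σ) μ t' ∧
                  ZFSet.pair r t' ∈ defCls F φ Γ)) ∨ ¬ CompatC M F r p))} := by
            intro t0 ht0P
            by_cases hc : CompatC M F t0 p
            · obtain ⟨u, huM, huP, hut, hup⟩ := hc
              obtain ⟨r, hrM, hrq, hw⟩ := hEC u huM hup
              have hrleP := pair_mem_LeCls.1 hrq
              exact ⟨r, ⟨hrM, hrleP.1, Or.inl hw⟩, hrleP.1,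
                F.le_trans r hrleP.1 u huP t0 ht0P hrleP.2.2 (pair_mem_LeCls.1 hut).2.2⟩
            · exact ⟨t0, ⟨F.P_subM t0 ht0P, ht0P, Or.inr hc⟩, ht0P, F.le_refl t0 ht0P⟩
          obtain ⟨r, ⟨hrM, hrP, hor⟩, hrG⟩ := hG.meets _ hD (fun r hr => hr.2.1) hdense
          rcases hor with ⟨μ, hμM, t', ht'M, hsn, hmem⟩ | hnc
          · have ht' : t' = tupleZF (Fin.snoc σ μ : Fin (n+1) → ZFSet) :=
              (SnocSem_iff hMp hM0 hμM σ hv t').1 hsn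
            subst ht'
            obtain ⟨p', hp', σ'', hσ'', hFφ, hx⟩ := hmem
            obtain ⟨rfl, h2⟩ := ZFSet.pair_injective hx.symm
            obtain rfl := tupleZF_injective h2.symm
            have hμn : μ ∈ M ∧ IsName F.P μ := by
              simpa using hσ'' (Fin.last n)
            refine ⟨val G μ, ⟨μ, hμn.1, hμn.2, rfl⟩, ?_⟩
            rw [← val_comp_snoc]
            exact hFφ G hG hrG
          · exact absurd (compatC_of_mem_generic hG hrG hpG) hnc
      rw [he]
      exact hS
    · intro Γ hΓ σ hσ G hG hsat
      rw [satC_ex] at hsat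
      obtain ⟨x, hxMG, hs⟩ := hsat
      obtain ⟨μ, hμM, hμn, rfl⟩ := hxMG
      rw [← val_comp_snoc] at hs
      obtain ⟨r, hrG, hFφ⟩ := ih.2 Γ hΓ _ (names_snoc hσ ⟨hμM, hμn⟩) G hG hs
      refine ⟨r, hrG, fun G' hG' hrG' => ?_⟩
      rw [satC_ex]
      refine ⟨val G' μ, ⟨μ, hμM, hμn, rfl⟩, ?_⟩
      rw [← val_comp_snoc]
      exact hFφ G' hG' hrG'

end Phase3

/-- Let `(M, C)` be a countable transitive model of `GB⁻` and
`ℙ` a notion of class forcing for `(M, C)`. If `ℙ` satisfies the definability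
lemma for `v₀ ∈ v₁` or for `v₀ = v₁`, then `ℙ` satisfies the forcing theorem
for all atomic ∈-formulae and, in fact, for every formula of every language
`L^κ` (with `κ` unary predicates interpreted by evaluations of class names). -/
theorem statement10 (M : ZFSet) (C : Set (Set ZFSet)) (hMC : GBminus M C)
    (F : ClassForcing M C)
    (h : DefLemma F (CFml.mem 0 1 : Fml 2) ∨ DefLemma F (CFml.eq 0 1 : Fml 2)) :
    (ForcingThm F (CFml.mem 0 1 : Fml 2) ∧ ForcingThm F (CFml.eq 0 1 : Fml 2)) ∧
    ∀ (κ n : ℕ) (φ : CFml κ n), ForcingThm F φ := by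
  obtain ⟨hAm, hAe⟩ := atomic_classes hMC F h
  exact ⟨⟨forcingThm_all hMC F hAm hAe _, forcingThm_all hMC F hAm hAe _⟩,
    fun κ n φ => forcingThm_all hMC F hAm hAe φ⟩

end CF
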